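/- arXiv:2504.18517 — 6 statements merged into one kernel-verified Lean document; each statement's English description precedes it below -/
import Mathlib

section
/- Let n ≥ 2 and suppose R ⊆ Ω ⊆ Q are subsets of ℝⁿ where R is a rectangular prism and Q = n^{3/2}·R is the dilation of R by factor n^{3/2} about its center, and Ω is a bounded convex domain. Then n^{-3n(n-1)/2} · |∂R|ⁿ/|R|^{n-1} ≤ |∂Ω|ⁿ/|Ω|^{n-1} ≤ n^{3n(n-1)/2} · |∂R|ⁿ/|R|^{n-1}. -/
open MeasureTheory Bornology

section Auxiliary

open Metric Set Module
open scoped RealInnerProductSpace ENNReal NNReal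


/-- Key variational-inequality estimate: nearest-point maps are contractive. -/
lemma vi_dist_le {E : Type*} [NormedAddCommGroup E] [InnerProductSpace ℝ E]
    {A : Set E} {u u' p q : E} (hp : p ∈ A) (hq : q ∈ A)
    (hup : ∀ w ∈ A, ⟪u - p, w - p⟫ ≤ 0) (huq : ∀ w ∈ A, ⟪u' - q, w - q⟫ ≤ 0) :
    ‖p - q‖ ≤ ‖u - u'‖ := by
  have h1 : ⟪u - p, q - p⟫ ≤ 0 := hup q hq
  have h2 : ⟪u' - q, p - q⟫ ≤ 0 := huq p hp
  have key : ‖p - q‖ ^ 2 ≤ ⟪u - u', p - q⟫ := by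
    have : ⟪u - u', p - q⟫ - ‖p - q‖ ^ 2 = (- ⟪u - p, q - p⟫) + (- ⟪u' - q, p - q⟫) := by
      rw [← real_inner_self_eq_norm_sq]
      simp only [inner_sub_left, inner_sub_right]
      ring
    nlinarith [this]
  rcases eq_or_lt_of_le (norm_nonneg (p - q)) with h0 | h0
  · rw [← h0]; exact norm_nonneg _
  · have hcs : ⟪u - u', p - q⟫ ≤ ‖u - u'‖ * ‖p - q‖ := real_inner_le_norm _ _
    nlinarith

/-- Monotonicity of surface area for nested convex bodies. -/
lemma surface_mono {n : ℕ} {A B : Set (EuclideanSpace ℝ (Fin n))}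
    (hA : Convex ℝ A) (hAc : IsClosed A) (hAi : (interior A).Nonempty)
    (hB : Convex ℝ B) (hBc : IsClosed B) (hBb : IsBounded B)
    (hAB : A ⊆ B) {d : ℝ} (hd : 0 ≤ d) :
    μH[d] (frontier A) ≤ μH[d] (frontier B) := by
  have hAne : A.Nonempty := hAi.mono interior_subset
  -- metric projection onto A
  have hex : ∀ u : EuclideanSpace ℝ (Fin n), ∃ p, p ∈ A ∧ ∀ w ∈ A, ⟪u - p, w - p⟫ ≤ 0 := by
    intro u
    obtain ⟨v, hv, hnorm⟩ := exists_norm_eq_iInf_of_complete_convex hAne hAc.isComplete hA u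
    exact ⟨v, hv, (norm_eq_iInf_iff_real_inner_le_zero hA hv).1 hnorm⟩
  choose proj hmem hVI using hex
  have lip : LipschitzWith 1 proj := by
    apply LipschitzWith.of_dist_le_mul
    intro u u'
    simp only [dist_eq_norm, NNReal.coe_one, one_mul]
    exact vi_dist_le (hmem u) (hmem u') (hVI u) (hVI u')
  have surj : frontier A ⊆ proj '' frontier B := by
    intro y hyf
    have hy : y ∈ A := by
      rw [hAc.frontier_eq] at hyf; exact hyf.1
    have hyni : y ∉ interior A := by
      rw [hAc.frontier_eq] at hyf; exact hyf.2
    obtain ⟨f, hf⟩ := geometric_hahn_banach_open_point hA.interior isOpen_interior hyni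
    obtain ⟨a₀, ha₀⟩ := hAi
    -- f ≤ f y on all of A
    have hfA : ∀ w ∈ A, f w ≤ f y := by
      intro w hw
      have htends : Filter.Tendsto (fun t : ℝ => f (w + t • (a₀ - w))) (nhdsWithin 0 (Set.Ioi 0))
          (nhds (f w)) := by
        have : Filter.Tendsto (fun t : ℝ => f (w + t • (a₀ - w))) (nhds 0) (nhds (f w)) := by
          have hc : Continuous fun t : ℝ => f (w + t • (a₀ - w)) := by
            exact f.continuous.comp (continuous_const.add (continuous_id.smul continuous_const))
          simpa using hc.tendsto 0
        exact this.mono_left nhdsWithin_le_nhds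
      refine le_of_tendsto htends ?_
      filter_upwards [Ioc_mem_nhdsGT_of_mem (Set.left_mem_Ico.2 one_pos)] with t ht
      exact (hf _ (hA.add_smul_sub_mem_interior hw ha₀ ht)).le
    set v := (InnerProductSpace.toDual ℝ (EuclideanSpace ℝ (Fin n))).symm f with hvdef
    have hinner : ∀ z : EuclideanSpace ℝ (Fin n), ⟪v, z⟫ = f z := fun z => InnerProductSpace.toDual_symm_apply
    have hvne : v ≠ 0 := by
      intro h0
      have := hf a₀ ha₀
      have h1 : f a₀ = 0 := by rw [← hinner a₀, h0, inner_zero_left]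
      have h2 : f y = 0 := by rw [← hinner y, h0, inner_zero_left]
      rw [h1, h2] at this; exact lt_irrefl _ this
    have hvpos : 0 < ‖v‖ := norm_pos_iff.2 hvne
    set T : Set ℝ := {t : ℝ | 0 ≤ t ∧ y + t • v ∈ B} with hTdef
    have hT0 : (0 : ℝ) ∈ T := ⟨le_refl _, by simpa using hAB hy⟩
    have hTne : T.Nonempty := ⟨0, hT0⟩
    obtain ⟨ρ, hρ⟩ := hBb.subset_closedBall 0
    have hTbdd : BddAbove T := by
      refine ⟨2 * ρ / ‖v‖, fun t ht => ?_⟩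
      have h1 : ‖y + t • v‖ ≤ ρ := by simpa [Metric.mem_closedBall, dist_zero_right] using hρ ht.2
      have h2 : ‖y‖ ≤ ρ := by simpa [Metric.mem_closedBall, dist_zero_right] using hρ (hAB hy)
      have h3 : t * ‖v‖ ≤ 2 * ρ := by
        have : ‖t • v‖ ≤ ‖y + t • v‖ + ‖y‖ := by
          have := norm_sub_le (y + t • v) y
          simpa using this
        rw [norm_smul, Real.norm_eq_abs, abs_of_nonneg ht.1] at this
        linarith
      rw [le_div_iff₀ hvpos]; exact h3
    have hTcl : IsClosed T := by
      have : T = Set.Ici (0:ℝ) ∩ (fun t : ℝ => y + t • v) ⁻¹' B := by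
        ext t; simp [hTdef, Set.mem_Ici, and_comm]
      rw [this]
      exact isClosed_Ici.inter (hBc.preimage (continuous_const.add (continuous_id.smul continuous_const)))
    set t₀ : ℝ := sSup T with ht₀def
    have ht₀T : t₀ ∈ T := hTcl.csSup_mem hTne hTbdd
    set x := y + t₀ • v with hxdef
    have hxB : x ∈ B := ht₀T.2
    have hxni : x ∉ interior B := by
      intro hxint
      obtain ⟨ε, hε, hball⟩ := Metric.mem_nhds_iff.1 (mem_interior_iff_mem_nhds.1 hxint)
      set δ : ℝ := ε / (2 * ‖v‖) with hδdef
      have hδpos : 0 < δ := by positivity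
      have hmem' : t₀ + δ ∈ T := by
        constructor
        · linarith [ht₀T.1]
        · apply hball
          rw [Metric.mem_ball, dist_eq_norm]
          have : y + (t₀ + δ) • v - x = δ • v := by
            rw [hxdef]; rw [add_smul]; abel
          rw [this, norm_smul, Real.norm_eq_abs, abs_of_pos hδpos, hδdef]
          rw [div_mul_eq_mul_div, mul_comm (2:ℝ) ‖v‖, ← div_div]
          rw [mul_div_assoc, div_self (ne_of_gt hvpos)]
          linarith
      have := le_csSup hTbdd hmem'
      linarith
    have hxf : x ∈ frontier B := by
      rw [hBc.frontier_eq]; exact ⟨hxB, hxni⟩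
    have hVIy : ∀ w ∈ A, ⟪x - y, w - y⟫ ≤ 0 := by
      intro w hw
      have : x - y = t₀ • v := by rw [hxdef]; abel
      rw [this, real_inner_smul_left]
      have : ⟪v, w - y⟫ = f w - f y := by rw [hinner]; simp
      rw [this]
      exact mul_nonpos_of_nonneg_of_nonpos ht₀T.1 (by linarith [hfA w hw])
    have : ‖proj x - y‖ ≤ ‖x - x‖ := vi_dist_le (hmem x) hy (hVI x) hVIy
    have hpy : proj x = y := by
      rw [sub_self, norm_zero] at this
      have := le_antisymm this (norm_nonneg _)
      rwa [norm_eq_zero, sub_eq_zero] at this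
    exact ⟨x, hxf, hpy⟩
  calc μH[d] (frontier A) ≤ μH[d] (proj '' frontier B) := measure_mono surj
    _ ≤ (1 : ℝ≥0∞) ^ d * μH[d] (frontier B) := by
        simpa using lip.hausdorffMeasure_image_le hd (frontier B)
    _ = μH[d] (frontier B) := by rw [ENNReal.one_rpow, one_mul]


/-- A bounded piece of a coordinate hyperplane has finite `m`-dimensional Hausdorff measure. -/
lemma slice_finite (m : ℕ) (i : Fin (m + 1)) (a ρ : ℝ) :
    μH[(m : ℝ)] {x : EuclideanSpace ℝ (Fin (m + 1)) | x i = a ∧ ‖x‖ ≤ ρ} < ⊤ := by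
  set g : EuclideanSpace ℝ (Fin m) → EuclideanSpace ℝ (Fin (m + 1)) :=
    fun y => WithLp.toLp 2 (i.insertNth a (fun j => y j)) with hgdef
  have hgapp_same : ∀ y : EuclideanSpace ℝ (Fin m), g y i = a := by
    intro y; simp [hgdef]
  have hgapp : ∀ (y : EuclideanSpace ℝ (Fin m)) (j : Fin m), g y (i.succAbove j) = y j := by
    intro y j; simp [hgdef]
  have hg : Isometry g := by
    apply Isometry.of_dist_eq
    intro y z
    rw [EuclideanSpace.dist_eq, EuclideanSpace.dist_eq]
    congr 1
    rw [Fin.sum_univ_succAbove (fun k => dist (g y k) (g z k) ^ 2) i]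
    simp [hgapp_same, hgapp]
  have hsub : {x : EuclideanSpace ℝ (Fin (m + 1)) | x i = a ∧ ‖x‖ ≤ ρ}
      ⊆ g '' (Metric.closedBall 0 ρ) := by
    rintro x ⟨hxi, hxρ⟩
    refine ⟨WithLp.toLp 2 (fun j => x (i.succAbove j)), ?_, ?_⟩
    · rw [Metric.mem_closedBall, dist_zero_right]
      refine le_trans ?_ hxρ
      rw [EuclideanSpace.norm_eq, EuclideanSpace.norm_eq]
      apply Real.sqrt_le_sqrt
      rw [Fin.sum_univ_succAbove (fun k => ‖x k‖ ^ 2) i]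
      have : (0:ℝ) ≤ ‖x i‖ ^ 2 := sq_nonneg _
      linarith [le_refl (∑ j : Fin m, ‖x (i.succAbove j)‖ ^ 2)]
    · ext k
      rcases eq_or_ne k i with rfl | hk
      · rw [hgapp_same, hxi]
      · obtain ⟨j, hj⟩ := Fin.exists_succAbove_eq hk
        rw [← hj, hgapp]
  calc μH[(m : ℝ)] {x : EuclideanSpace ℝ (Fin (m + 1)) | x i = a ∧ ‖x‖ ≤ ρ}
      ≤ μH[(m : ℝ)] (g '' (Metric.closedBall 0 ρ)) := measure_mono hsub
    _ = μH[(m : ℝ)] (Metric.closedBall (0 : EuclideanSpace ℝ (Fin m)) ρ) :=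
        hg.hausdorffMeasure_image (Or.inl (Nat.cast_nonneg m)) _
    _ < ⊤ := by
        haveI : (μH[(m : ℝ)] : Measure (EuclideanSpace ℝ (Fin m))).IsAddHaarMeasure := by
          have h : ((m : ℝ)) = ((finrank ℝ (EuclideanSpace ℝ (Fin m)) : ℕ) : ℝ) := by
            rw [finrank_euclideanSpace_fin]
          rw [h]
          infer_instance
        exact (isCompact_closedBall 0 ρ).measure_lt_top


section Box

variable {N : ℕ} (c : EuclideanSpace ℝ (Fin N)) (b : Fin N → ℝ)

lemma box_convex : Convex ℝ {x : EuclideanSpace ℝ (Fin N) | ∀ i, |x i - c i| ≤ b i} := by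
  intro x hx y hy s t hs ht hst
  intro i
  have happ : (s • x + t • y : EuclideanSpace ℝ (Fin N)) i = s * x i + t * y i := rfl
  have h1 : (s • x + t • y : EuclideanSpace ℝ (Fin N)) i - c i
      = s * (x i - c i) + t * (y i - c i) := by
    rw [happ]; linear_combination (c i) * hst
  calc |(s • x + t • y : EuclideanSpace ℝ (Fin N)) i - c i|
      = |s * (x i - c i) + t * (y i - c i)| := by rw [h1]
    _ ≤ |s * (x i - c i)| + |t * (y i - c i)| := abs_add_le _ _
    _ = s * |x i - c i| + t * |y i - c i| := by
        rw [abs_mul, abs_mul, abs_of_nonneg hs, abs_of_nonneg ht]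
    _ ≤ s * b i + t * b i := by
        have := hx i; have := hy i
        apply add_le_add <;> apply mul_le_mul_of_nonneg_left <;> assumption
    _ = b i := by rw [← add_mul, hst, one_mul]

lemma box_coord_continuous (i : Fin N) :
    Continuous fun x : EuclideanSpace ℝ (Fin N) => x i :=
  (EuclideanSpace.proj (𝕜 := ℝ) i).continuous

lemma box_closed : IsClosed {x : EuclideanSpace ℝ (Fin N) | ∀ i, |x i - c i| ≤ b i} := by
  have : {x : EuclideanSpace ℝ (Fin N) | ∀ i, |x i - c i| ≤ b i}
      = ⋂ i, {x : EuclideanSpace ℝ (Fin N) | |x i - c i| ≤ b i} := by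
    ext x; simp
  rw [this]
  exact isClosed_iInter fun i =>
    isClosed_le (((box_coord_continuous i).sub continuous_const).abs) continuous_const

lemma box_open_aux : IsOpen {x : EuclideanSpace ℝ (Fin N) | ∀ i, |x i - c i| < b i} := by
  have : {x : EuclideanSpace ℝ (Fin N) | ∀ i, |x i - c i| < b i}
      = ⋂ i, {x : EuclideanSpace ℝ (Fin N) | |x i - c i| < b i} := by
    ext x; simp
  rw [this]
  exact isOpen_iInter_of_finite fun i =>
    isOpen_lt (((box_coord_continuous i).sub continuous_const).abs) continuous_const

lemma box_mem_interior (hb : ∀ i, 0 < b i) :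
    c ∈ interior {x : EuclideanSpace ℝ (Fin N) | ∀ i, |x i - c i| ≤ b i} := by
  have hsub : {x : EuclideanSpace ℝ (Fin N) | ∀ i, |x i - c i| < b i}
      ⊆ {x : EuclideanSpace ℝ (Fin N) | ∀ i, |x i - c i| ≤ b i} :=
    fun x hx i => (hx i).le
  have := interior_maximal hsub (box_open_aux c b)
  apply this
  intro i
  simpa using hb i

lemma box_subset_ball :
    {x : EuclideanSpace ℝ (Fin N) | ∀ i, |x i - c i| ≤ b i}
      ⊆ Metric.closedBall c (Real.sqrt (∑ i, b i ^ 2)) := by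
  intro x hx
  rw [Metric.mem_closedBall, EuclideanSpace.dist_eq]
  apply Real.sqrt_le_sqrt
  apply Finset.sum_le_sum
  intro i _
  rw [Real.dist_eq]
  have h1 : |x i - c i| ≤ b i := hx i
  have h2 : (0:ℝ) ≤ |x i - c i| := abs_nonneg _
  nlinarith

lemma box_frontier_subset (hb : ∀ i, 0 < b i) {ρ : ℝ}
    (hρ : ∀ x ∈ {x : EuclideanSpace ℝ (Fin N) | ∀ i, |x i - c i| ≤ b i}, ‖x‖ ≤ ρ) :
    frontier {x : EuclideanSpace ℝ (Fin N) | ∀ i, |x i - c i| ≤ b i}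
      ⊆ ⋃ i : Fin N, ({x : EuclideanSpace ℝ (Fin N) | x i = c i - b i ∧ ‖x‖ ≤ ρ}
          ∪ {x : EuclideanSpace ℝ (Fin N) | x i = c i + b i ∧ ‖x‖ ≤ ρ}) := by
  intro x hx
  have hxS : x ∈ {x : EuclideanSpace ℝ (Fin N) | ∀ i, |x i - c i| ≤ b i} := by
    have := frontier_subset_closure (s := {x : EuclideanSpace ℝ (Fin N) | ∀ i, |x i - c i| ≤ b i}) hx
    rwa [(box_closed c b).closure_eq] at this
  have hxni : x ∉ interior {x : EuclideanSpace ℝ (Fin N) | ∀ i, |x i - c i| ≤ b i} := hx.2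
  have hnorm : ‖x‖ ≤ ρ := hρ x hxS
  by_contra hcon
  simp only [Set.mem_iUnion, Set.mem_union, Set.mem_setOf_eq, not_or, not_exists, not_and] at hcon
  apply hxni
  have hsub : {x : EuclideanSpace ℝ (Fin N) | ∀ i, |x i - c i| < b i}
      ⊆ {x : EuclideanSpace ℝ (Fin N) | ∀ i, |x i - c i| ≤ b i} :=
    fun x hx i => (hx i).le
  apply interior_maximal hsub (box_open_aux c b)
  intro i
  rcases lt_or_eq_of_le (hxS i) with h | h
  · exact h
  · exfalso
    rcases abs_eq (hb i).le |>.1 h with h1 | h1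
    · exact (hcon i).2 (by linarith) hnorm
    · exact (hcon i).1 (by linarith) hnorm

end Box

lemma convex_open_interior_closure {E : Type*} [NormedAddCommGroup E] [NormedSpace ℝ E]
    {Ω : Set E} (ho : IsOpen Ω) (hc : Convex ℝ Ω) (hne : Ω.Nonempty) :
    interior (closure Ω) = Ω := by
  apply subset_antisymm
  · intro x hx
    obtain ⟨a₀, ha₀⟩ := hne
    by_cases hu : x - a₀ = 0
    · rw [sub_eq_zero] at hu; rwa [hu]
    have hnorm : 0 < ‖x - a₀‖ := norm_pos_iff.2 hu
    obtain ⟨ε, hε, hball⟩ := Metric.mem_nhds_iff.1 (mem_interior_iff_mem_nhds.1 hx)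
    set k : ℝ := ε / (2 * ‖x - a₀‖) with hkdef
    have hkpos : 0 < k := by positivity
    have h1k : (0:ℝ) < 1 + k := by linarith
    set x' := x + k • (x - a₀) with hx'def
    have hx' : x' ∈ closure Ω := by
      apply hball
      rw [Metric.mem_ball, dist_eq_norm]
      have : x' - x = k • (x - a₀) := by rw [hx'def]; abel
      rw [this, norm_smul, Real.norm_eq_abs, abs_of_pos hkpos, hkdef]
      rw [div_mul_eq_mul_div, mul_comm (2:ℝ) ‖x - a₀‖, ← div_div, mul_div_assoc,
        div_self (ne_of_gt hnorm)]
      linarith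
    set t : ℝ := k / (1 + k) with htdef
    have ht : t ∈ Set.Ioc (0:ℝ) 1 := by
      constructor
      · positivity
      · rw [htdef, div_le_one h1k]; linarith
    have hmem := hc.add_smul_sub_mem_interior' hx' (by rwa [ho.interior_eq]) ht
    have hxeq : x' + t • (a₀ - x') = x := by
      rw [hx'def, htdef]
      match_scalars <;> field_simp <;> ring
    rw [hxeq] at hmem
    rwa [ho.interior_eq] at hmem
  · intro x hx
    exact interior_mono subset_closure (ho.interior_eq.symm ▸ hx)

end Auxiliary

section Main

open Metric Set Module
open scoped RealInnerProductSpace ENNReal NNReal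

/-- If `R ⊆ Ω ⊆ Q` with `R` a rectangular prism, `Q` its dilation about its
center by factor `n^{3/2}` and `Ω` a bounded convex domain, then the isoperimetric ratio of
`Ω` is within a factor `n^{3n(n-1)/2}` of that of `R`.  Here `|·|` is Lebesgue measure and
`|∂·|` the `(n-1)`-dimensional Hausdorff measure of the frontier. -/
theorem stmt1 (n : ℕ) (hn : 2 ≤ n) (c : EuclideanSpace ℝ (Fin n)) (b : Fin n → ℝ)
    (hb : ∀ i, 0 < b i) (R Q Ω : Set (EuclideanSpace ℝ (Fin n)))
    (hR : R = {x | ∀ i, |x i - c i| ≤ b i})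
    (hQ : Q = {x | ∀ i, |x i - c i| ≤ (n : ℝ) ^ ((3 : ℝ) / 2) * b i})
    (hΩo : IsOpen Ω) (hΩc : Convex ℝ Ω) (hΩb : IsBounded Ω)
    (hRΩ : R ⊆ Ω) (hΩQ : Ω ⊆ Q) :
    ((n : ℝ) ^ (3 * n * (n - 1) / 2 : ℕ))⁻¹ *
        ((μH[((n : ℝ) - 1)] (frontier R)).toReal ^ n / (volume R).toReal ^ (n - 1))
      ≤ (μH[((n : ℝ) - 1)] (frontier Ω)).toReal ^ n / (volume Ω).toReal ^ (n - 1) ∧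
    (μH[((n : ℝ) - 1)] (frontier Ω)).toReal ^ n / (volume Ω).toReal ^ (n - 1)
      ≤ (n : ℝ) ^ (3 * n * (n - 1) / 2 : ℕ) *
        ((μH[((n : ℝ) - 1)] (frontier R)).toReal ^ n / (volume R).toReal ^ (n - 1)) := by
  obtain ⟨m, rfl⟩ : ∃ m, n = m + 1 := ⟨n - 1, by omega⟩
  have hm : 1 ≤ m := by omega
  -- rewrite the Hausdorff dimension index
  have hidx : ((m + 1 : ℕ) : ℝ) - 1 = (m : ℝ) := by push_cast; ring
  rw [hidx]
  set d : ℝ := (m : ℝ) with hddef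
  have hd0 : (0 : ℝ) ≤ d := Nat.cast_nonneg m
  set lam : ℝ := ((m + 1 : ℕ) : ℝ) ^ ((3 : ℝ) / 2) with hlamdef
  have hnpos : (0 : ℝ) < ((m + 1 : ℕ) : ℝ) := by positivity
  have hlam : 0 < lam := Real.rpow_pos_of_pos hnpos _
  have hlam1 : 1 ≤ lam := by
    rw [hlamdef]
    apply Real.one_le_rpow (by push_cast; linarith) (by norm_num)
  -- box facts for R
  have hRconv : Convex ℝ R := hR ▸ box_convex c b
  have hRcl : IsClosed R := hR ▸ box_closed c b
  have hcR : c ∈ interior R := hR ▸ box_mem_interior c b hb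
  have hRball := hR ▸ box_subset_ball c b
  have hRbd : IsBounded R := (isBounded_closedBall).subset hRball
  have hRcom : IsCompact R := Metric.isCompact_of_isClosed_isBounded hRcl hRbd
  -- box facts for Q
  have hbQ : ∀ i, 0 < lam * b i := fun i => mul_pos hlam (hb i)
  have hQconv : Convex ℝ Q := hQ ▸ box_convex c _
  have hQcl : IsClosed Q := hQ ▸ box_closed c _
  have hQball := hQ ▸ box_subset_ball c (fun i => lam * b i)
  have hQbd : IsBounded Q := (isBounded_closedBall).subset hQball
  have hQcom : IsCompact Q := Metric.isCompact_of_isClosed_isBounded hQcl hQbd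
  have hcRmem : c ∈ R := interior_subset hcR
  -- Q is the homothety image of R
  have hQR : Q = AffineMap.homothety c lam '' R := by
    rw [hR, hQ]
    ext x
    simp only [Set.mem_image, Set.mem_setOf_eq, AffineMap.homothety_apply]
    constructor
    · intro hx
      refine ⟨c + lam⁻¹ • (x - c), fun i => ?_, ?_⟩
      · have happ : ((c + lam⁻¹ • (x - c) : EuclideanSpace ℝ (Fin (m+1))) i - c i)
            = lam⁻¹ * (x i - c i) := by
          simp [PiLp.add_apply, PiLp.smul_apply, PiLp.sub_apply, smul_eq_mul]
        rw [happ, abs_mul, abs_of_pos (inv_pos.2 hlam)]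
        calc lam⁻¹ * |x i - c i| ≤ lam⁻¹ * (lam * b i) :=
              mul_le_mul_of_nonneg_left (hx i) (inv_pos.2 hlam).le
          _ = b i := by field_simp
      · have : (c + lam⁻¹ • (x - c) : EuclideanSpace ℝ (Fin (m+1))) -ᵥ c
            = lam⁻¹ • (x - c) := by simp [vsub_eq_sub]
        rw [this, smul_smul, mul_inv_cancel₀ hlam.ne', one_smul]
        simp [vadd_eq_add]
    · rintro ⟨r, hr, rfl⟩
      intro i
      have happ : ((lam • (r -ᵥ c) +ᵥ c : EuclideanSpace ℝ (Fin (m+1))) i - c i)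
          = lam * (r i - c i) := by
        simp [vsub_eq_sub, vadd_eq_add, PiLp.add_apply, PiLp.smul_apply, PiLp.sub_apply,
          smul_eq_mul]
      rw [happ, abs_mul, abs_of_pos hlam]
      exact mul_le_mul_of_nonneg_left (hr i) hlam.le
  -- frontier of Q is the homothety image of frontier of R
  have hfrQR : frontier Q = AffineMap.homothety c lam '' frontier R := by
    set e : EuclideanSpace ℝ (Fin (m+1)) ≃ₜ EuclideanSpace ℝ (Fin (m+1)) :=
      ((Homeomorph.subRight c).trans (Homeomorph.smulOfNeZero lam hlam.ne')).trans
        (Homeomorph.addRight c) with hedef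
    have he : ⇑e = ⇑(AffineMap.homothety c lam) := by
      funext x
      simp [hedef, Homeomorph.trans_apply, AffineMap.homothety_apply, vsub_eq_sub, vadd_eq_add]
    rw [hQR, ← he, Homeomorph.image_frontier]
  -- volume facts
  have hfr : finrank ℝ (EuclideanSpace ℝ (Fin (m+1))) = m + 1 := finrank_euclideanSpace_fin
  have hvolQR : volume Q = ENNReal.ofReal (lam ^ (m+1)) * volume R := by
    rw [hQR, Measure.addHaar_image_homothety, hfr, abs_of_pos (pow_pos hlam _)]
  have hvolRpos : 0 < volume R :=
    lt_of_lt_of_le (isOpen_interior.measure_pos volume ⟨c, hcR⟩) (measure_mono interior_subset)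
  have hvolRfin : volume R < ⊤ := hRcom.measure_lt_top
  have hvolQfin : volume Q < ⊤ := hQcom.measure_lt_top
  have hvolΩfin : volume Ω < ⊤ := lt_of_le_of_lt (measure_mono hΩQ) hvolQfin
  -- norm bound on R
  set ρ : ℝ := ‖c‖ + Real.sqrt (∑ i, b i ^ 2) with hρdef
  have hρR : ∀ x ∈ R, ‖x‖ ≤ ρ := by
    intro x hx
    have := hRball hx
    rw [Metric.mem_closedBall, dist_eq_norm] at this
    calc ‖x‖ = ‖c + (x - c)‖ := by congr 1; abel
      _ ≤ ‖c‖ + ‖x - c‖ := norm_add_le _ _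
      _ ≤ ρ := by rw [hρdef]; linarith
  -- finiteness of the surface measure of R
  have hSRfin : μH[d] (frontier R) < ⊤ := by
    have hcov := hR ▸ box_frontier_subset c b hb (hR ▸ hρR)
    refine lt_of_le_of_lt ((measure_mono hcov).trans (measure_iUnion_le _)) ?_
    rw [tsum_fintype]
    refine ENNReal.sum_lt_top.2 fun i _ => ?_
    refine lt_of_le_of_lt (measure_union_le _ _) (ENNReal.add_lt_top.2 ⟨?_, ?_⟩)
    · exact slice_finite m i (c i - b i) ρ
    · exact slice_finite m i (c i + b i) ρ
  -- surface monotonicity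
  have hclΩconv : Convex ℝ (closure Ω) := hΩc.closure
  have hclΩint : interior (closure Ω) = Ω :=
    convex_open_interior_closure hΩo hΩc ⟨c, hRΩ hcRmem⟩
  have hfrclΩ : frontier (closure Ω) = frontier Ω := by
    rw [frontier, closure_closure, hclΩint, frontier, hΩo.interior_eq]
  have hmono1 : μH[d] (frontier R) ≤ μH[d] (frontier Ω) := by
    rw [← hfrclΩ]
    exact surface_mono hRconv hRcl ⟨c, hcR⟩ hclΩconv isClosed_closure hΩb.closure
      (hRΩ.trans subset_closure) hd0
  have hmono2 : μH[d] (frontier Ω) ≤ μH[d] (frontier Q) := by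
    rw [← hfrclΩ]
    refine surface_mono hclΩconv isClosed_closure ?_ hQconv hQcl hQbd
      (closure_minimal hΩQ hQcl) hd0
    rw [hclΩint]; exact ⟨c, hRΩ hcRmem⟩
  have hSQ : μH[d] (frontier Q) = ((‖lam‖₊ : ℝ≥0∞) ^ d) * μH[d] (frontier R) := by
    rw [hfrQR, MeasureTheory.hausdorffMeasure_homothety_image hd0 c hlam.ne' (frontier R)]
    rw [ENNReal.smul_def, smul_eq_mul, ENNReal.coe_rpow_of_nonneg _ hd0]
  have hcoef : (((‖lam‖₊ : ℝ≥0∞) ^ d)).toReal = lam ^ m := by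
    rw [hddef, ENNReal.rpow_natCast, ENNReal.toReal_pow, ENNReal.coe_toReal, coe_nnnorm,
      Real.norm_eq_abs, abs_of_pos hlam]
  have hSQfin : μH[d] (frontier Q) < ⊤ := by
    rw [hSQ]
    exact ENNReal.mul_lt_top (ENNReal.rpow_lt_top_of_nonneg hd0 ENNReal.coe_ne_top) hSRfin
  have hSΩfin : μH[d] (frontier Ω) < ⊤ := lt_of_le_of_lt hmono2 hSQfin
  -- pass to real numbers
  set sR : ℝ := (μH[d] (frontier R)).toReal with hsRdef
  set sΩ : ℝ := (μH[d] (frontier Ω)).toReal with hsΩdef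
  set vR : ℝ := (volume R).toReal with hvRdef
  set vΩ : ℝ := (volume Ω).toReal with hvΩdef
  have hsR0 : 0 ≤ sR := ENNReal.toReal_nonneg
  have hsΩ0 : 0 ≤ sΩ := ENNReal.toReal_nonneg
  have f4 : sR ≤ sΩ := ENNReal.toReal_mono hSΩfin.ne hmono1
  have f5 : sΩ ≤ lam ^ m * sR := by
    have := ENNReal.toReal_mono hSQfin.ne hmono2
    rwa [hSQ, ENNReal.toReal_mul, hcoef] at this
  have hvRpos : 0 < vR := ENNReal.toReal_pos hvolRpos.ne' hvolRfin.ne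
  have f2 : vR ≤ vΩ := ENNReal.toReal_mono hvolΩfin.ne (measure_mono hRΩ)
  have f3 : vΩ ≤ lam ^ (m+1) * vR := by
    have := ENNReal.toReal_mono hvolQfin.ne (measure_mono hΩQ)
    rwa [hvolQR, ENNReal.toReal_mul, ENNReal.toReal_ofReal (pow_pos hlam _).le] at this
  have hvΩpos : 0 < vΩ := lt_of_lt_of_le hvRpos f2
  -- the constant
  have hKeq : ((m + 1 : ℕ) : ℝ) ^ (3 * (m+1) * m / 2 : ℕ) = lam ^ ((m+1) * m) := by
    have h1 : 2 ∣ (m+1) * m := by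
      have h := Nat.even_mul_succ_self m
      rw [mul_comm] at h
      exact h.two_dvd
    have hdvd : 2 ∣ 3 * (m+1) * m := by
      rw [mul_assoc]
      exact Dvd.dvd.mul_left h1 3
    rw [← Real.rpow_natCast lam ((m+1) * m), hlamdef, ← Real.rpow_mul hnpos.le,
      ← Real.rpow_natCast ((m + 1 : ℕ) : ℝ) (3 * (m+1) * m / 2)]
    congr 1
    rw [Nat.cast_div hdvd (by norm_num : ((2:ℕ):ℝ) ≠ 0)]
    push_cast
    ring
  have hKpos : 0 < lam ^ ((m+1) * m) := pow_pos hlam _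
  simp only [Nat.add_sub_cancel]
  rw [hKeq]
  constructor
  · -- lower bound
    have hrw : (lam ^ ((m+1) * m))⁻¹ * (sR ^ (m+1) / vR ^ m)
        = sR ^ (m+1) / (lam ^ ((m+1) * m) * vR ^ m) := by
      field_simp
    rw [hrw]
    apply div_le_div₀ (pow_nonneg hsΩ0 _) (pow_le_pow_left₀ hsR0 f4 _) (pow_pos hvΩpos _)
    calc vΩ ^ m ≤ (lam ^ (m+1) * vR) ^ m := pow_le_pow_left₀ hvΩpos.le f3 _
      _ = lam ^ ((m+1) * m) * vR ^ m := by rw [mul_pow, ← pow_mul]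
  · -- upper bound
    rw [mul_div_assoc'] at *
    apply div_le_div₀ (by positivity) ?_ (pow_pos hvRpos _) (pow_le_pow_left₀ hvRpos.le f2 _)
    calc sΩ ^ (m+1) ≤ (lam ^ m * sR) ^ (m+1) := pow_le_pow_left₀ hsΩ0 f5 _
      _ = lam ^ ((m+1) * m) * sR ^ (m+1) := by rw [mul_pow, ← pow_mul, mul_comm m (m+1)]

end Main
end

section
/- Let n ≥ 2 and let Ω ⊆ ℝⁿ be a bounded convex domain containing an ellipsoid J centered at the origin with axes along coordinate axes of lengths a_1 ≥ ... ≥ a_n > 0, such that Ω ⊆ Q where Q = ∏_{j=1}^n [-a_j·n, a_j·n]. Then |∂Ω| ≤ (2n)ⁿ/ω_{n-1} · A_{n-1}(Ω), where A_{n-1}(Ω) := sup over (n-1)-dimensional affine subspaces V of |Ω ∩ V|, and ω_{n-1} is the volume of the unit ball in ℝ^{n-1}. -/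
open MeasureTheory Bornology Finset

open scoped ENNReal RealInnerProductSpace NNReal


theorem proj_exists {E : Type*} [NormedAddCommGroup E] [InnerProductSpace ℝ E] [CompleteSpace E]
    {K : Set E} (hne : K.Nonempty) (hK : Convex ℝ K) (hcl : IsClosed K) :
    ∃ proj : E → E, LipschitzWith 1 proj ∧
      (∀ y, proj y ∈ K ∧ ∀ w ∈ K, ⟪y - proj y, w - proj y⟫ ≤ 0) ∧
      (∀ y x, x ∈ K → (∀ w ∈ K, ⟪y - x, w - x⟫ ≤ 0) → proj y = x) := by
  have spec : ∀ y : E, ∃ v, v ∈ K ∧ ∀ w ∈ K, ⟪y - v, w - v⟫ ≤ 0 := by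
    intro y
    obtain ⟨v, hv, hmin⟩ := exists_norm_eq_iInf_of_complete_convex hne hcl.isComplete hK y
    exact ⟨v, hv, (norm_eq_iInf_iff_real_inner_le_zero hK hv).1 hmin⟩
  choose proj hmem hvar using spec
  have key : ∀ (y₁ y₂ v₁ v₂ : E), v₁ ∈ K → v₂ ∈ K →
      (∀ w ∈ K, ⟪y₁ - v₁, w - v₁⟫ ≤ 0) → (∀ w ∈ K, ⟪y₂ - v₂, w - v₂⟫ ≤ 0) →
      ‖v₁ - v₂‖ ≤ ‖y₁ - y₂‖ := by
    intro y₁ y₂ v₁ v₂ h₁ h₂ hv₁ hv₂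
    have e1 : ⟪y₁ - v₁, v₂ - v₁⟫ ≤ 0 := hv₁ v₂ h₂
    have e2 : ⟪y₂ - v₂, v₁ - v₂⟫ ≤ 0 := hv₂ v₁ h₁
    have hsq : ‖v₁ - v₂‖ ^ 2 ≤ ⟪y₁ - y₂, v₁ - v₂⟫ := by
      have hvec : v₁ - v₂ = (v₁ - y₁) + (y₁ - y₂) + (y₂ - v₂) := by abel
      have expand : ⟪v₁ - v₂, v₁ - v₂⟫ =
          ⟪v₁ - y₁ + (y₁ - y₂) + (y₂ - v₂), v₁ - v₂⟫ := by rw [← hvec]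
      rw [inner_add_left, inner_add_left] at expand
      have e1' : ⟪v₁ - y₁, v₁ - v₂⟫ ≤ 0 := by
        have h := hv₁ v₂ h₂
        have : ⟪v₁ - y₁, v₁ - v₂⟫ = ⟪y₁ - v₁, v₂ - v₁⟫ := by
          rw [← inner_neg_neg (𝕜 := ℝ), neg_sub, neg_sub]
        linarith [this ▸ h]
      rw [← real_inner_self_eq_norm_sq, expand]
      linarith
    have cs : ⟪y₁ - y₂, v₁ - v₂⟫ ≤ ‖y₁ - y₂‖ * ‖v₁ - v₂‖ := real_inner_le_norm _ _
    rcases eq_or_lt_of_le (norm_nonneg (v₁ - v₂)) with h0 | h0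
    · rw [← h0]; exact norm_nonneg _
    · have : ‖v₁ - v₂‖ * ‖v₁ - v₂‖ ≤ ‖y₁ - y₂‖ * ‖v₁ - v₂‖ := by
        calc ‖v₁ - v₂‖ * ‖v₁ - v₂‖ = ‖v₁ - v₂‖ ^ 2 := by ring
        _ ≤ _ := le_trans hsq cs
      exact le_of_mul_le_mul_right this h0
  refine ⟨proj, ?_, fun y => ⟨hmem y, hvar y⟩, ?_⟩
  · refine LipschitzWith.of_dist_le_mul fun y₁ y₂ => ?_
    rw [NNReal.coe_one, one_mul, dist_eq_norm, dist_eq_norm]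
    exact key y₁ y₂ _ _ (hmem y₁) (hmem y₂) (hvar y₁) (hvar y₂)
  · intro y x hx hvx
    have := key y y (proj y) x (hmem y) hx (hvar y) hvx
    simpa [sub_eq_zero] using this

noncomputable def emb (m : ℕ) (i : Fin (m + 1)) (c : ℝ) :
    EuclideanSpace ℝ (Fin m) → EuclideanSpace ℝ (Fin (m + 1)) :=
  fun x => (WithLp.equiv 2 (Fin (m + 1) → ℝ)).symm
    (Fin.insertNth (α := fun _ => ℝ) i c (fun j => x j))

theorem emb_apply (m : ℕ) (i : Fin (m + 1)) (c : ℝ) (x : EuclideanSpace ℝ (Fin m)) :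
    ∀ j, emb m i c x j = Fin.insertNth (α := fun _ => ℝ) i c (fun j => x j) j := by
  intro j
  simp [emb, WithLp.equiv_symm_apply]

theorem emb_apply_same (m : ℕ) (i : Fin (m + 1)) (c : ℝ) (x : EuclideanSpace ℝ (Fin m)) :
    emb m i c x i = c := by
  rw [emb_apply, Fin.insertNth_apply_same]

theorem emb_apply_succAbove (m : ℕ) (i : Fin (m + 1)) (c : ℝ) (x : EuclideanSpace ℝ (Fin m))
    (j : Fin m) : emb m i c x (i.succAbove j) = x j := by
  rw [emb_apply, Fin.insertNth_apply_succAbove]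

theorem emb_isometry (m : ℕ) (i : Fin (m + 1)) (c : ℝ) : Isometry (emb m i c) := by
  refine Isometry.of_dist_eq fun x y => ?_
  rw [EuclideanSpace.dist_eq, EuclideanSpace.dist_eq]
  congr 1
  rw [Fin.sum_univ_succAbove _ i]
  simp [emb_apply_same, emb_apply_succAbove]

theorem vol_box (m : ℕ) (r : Fin m → ℝ) :
    volume {y : EuclideanSpace ℝ (Fin m) | ∀ j, |y j| ≤ r j} =
      ∏ j, ENNReal.ofReal (2 * r j) := by
  have hs : MeasurableSet (Set.pi Set.univ fun j => Set.Icc (-(r j)) (r j)) :=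
    MeasurableSet.univ_pi fun j => measurableSet_Icc
  have heq : {y : EuclideanSpace ℝ (Fin m) | ∀ j, |y j| ≤ r j} =
      ((MeasurableEquiv.toLp 2 (Fin m → ℝ)).symm) ⁻¹'
        (Set.pi Set.univ fun j => Set.Icc (-(r j)) (r j)) := by
    ext y
    simp only [MeasurableEquiv.toLp_symm_apply, Set.mem_preimage,
      Set.mem_pi, Set.mem_univ, forall_true_left, Set.mem_Icc, Set.mem_setOf_eq, abs_le,
      true_implies]
  rw [heq, (EuclideanSpace.volume_preserving_symm_measurableEquiv_toLp (Fin m)).measure_preimage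
    hs.nullMeasurableSet, volume_pi_pi]
  congr 1
  ext j
  rw [Real.volume_Icc]
  congr 1
  ring

theorem vol_ellipsoid (m : ℕ) (r : Fin m → ℝ) (hr : ∀ j, 0 < r j) :
    volume {y : EuclideanSpace ℝ (Fin m) | ∑ j, (y j / r j) ^ 2 < 1} =
      ENNReal.ofReal (∏ j, r j) * volume (Metric.ball (0 : EuclideanSpace ℝ (Fin m)) 1) := by
  classical
  set T := Matrix.toLin' (Matrix.diagonal r) with hT
  have hTapp : ∀ (x : Fin m → ℝ) j, T x j = r j * x j := by
    intro x j
    simp [hT, Matrix.toLin'_apply, Matrix.mulVec_diagonal]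
  set ballS : Set (Fin m → ℝ) := {x | ∑ j, x j ^ 2 < 1} with hballS
  set ellS : Set (Fin m → ℝ) := {x | ∑ j, (x j / r j) ^ 2 < 1} with hellS
  have hmeasell : MeasurableSet ellS := by
    have : IsOpen ellS := by
      have : Continuous fun x : Fin m → ℝ => ∑ j, (x j / r j) ^ 2 := by fun_prop
      exact isOpen_lt this continuous_const
    exact this.measurableSet
  have hmeasball : MeasurableSet ballS := by
    have : IsOpen ballS := by
      have : Continuous fun x : Fin m → ℝ => ∑ j, x j ^ 2 := by fun_prop
      exact isOpen_lt this continuous_const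
    exact this.measurableSet
  have himg : T '' ballS = ellS := by
    ext y
    constructor
    · rintro ⟨x, hx, rfl⟩
      have hj : ∀ j, (T x j / r j) = x j := fun j => by
        rw [hTapp]; exact mul_div_cancel_left₀ _ (hr j).ne'
      simpa [hellS, hballS, hj] using hx
    · intro hy
      refine ⟨fun j => y j / r j, hy, ?_⟩
      funext j
      rw [hTapp]
      exact mul_div_cancel₀ _ (hr j).ne'
  have hdet : T.det = ∏ j, r j := by
    rw [hT, LinearMap.det_toLin', Matrix.det_diagonal]
  have hhaar := Measure.addHaar_image_linearMap (volume : Measure (Fin m → ℝ)) T ballS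
  rw [himg, hdet] at hhaar
  have habs : |∏ j, r j| = ∏ j, r j := abs_of_pos (Finset.prod_pos fun j _ => hr j)
  rw [habs] at hhaar
  -- transfer to EuclideanSpace
  have h1 : {y : EuclideanSpace ℝ (Fin m) | ∑ j, (y j / r j) ^ 2 < 1} =
      ((MeasurableEquiv.toLp 2 (Fin m → ℝ)).symm) ⁻¹' ellS := by
    ext y; simp [MeasurableEquiv.toLp_symm_apply, hellS]
  have h2 : Metric.ball (0 : EuclideanSpace ℝ (Fin m)) 1 =
      ((MeasurableEquiv.toLp 2 (Fin m → ℝ)).symm) ⁻¹' ballS := by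
    rw [EuclideanSpace.ball_zero_eq _ zero_le_one]
    ext y; simp [MeasurableEquiv.toLp_symm_apply, hballS]
  rw [h1, h2,
    (EuclideanSpace.volume_preserving_symm_measurableEquiv_toLp (Fin m)).measure_preimage
      hmeasell.nullMeasurableSet,
    (EuclideanSpace.volume_preserving_symm_measurableEquiv_toLp (Fin m)).measure_preimage
      hmeasball.nullMeasurableSet]
  exact hhaar

/-- If the bounded convex domain `Ω ⊆ ℝⁿ` contains the origin-centered
ellipsoid with semi-axes `a₁ ≥ ... ≥ aₙ > 0` along the coordinate axes and is contained in
the box `Q = ∏ⱼ [-aⱼn, aⱼn]`, then `|∂Ω| ≤ (2n)ⁿ/ω_{n-1} · A_{n-1}(Ω)`, where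
`A_{n-1}(Ω)` is the supremum of the `(n-1)`-dimensional Hausdorff measures of the
intersections of `Ω` with `(n-1)`-dimensional affine subspaces, and `ω_{n-1}` is the volume
of the unit ball in `ℝ^{n-1}`. -/
theorem stmt3 (n : ℕ) (hn : 2 ≤ n) (Ω : Set (EuclideanSpace ℝ (Fin n)))
    (hΩo : IsOpen Ω) (hΩc : Convex ℝ Ω) (hΩb : IsBounded Ω)
    (a : Fin n → ℝ) (ha : ∀ i, 0 < a i) (hmono : ∀ i j : Fin n, i ≤ j → a j ≤ a i)
    (hJΩ : {x : EuclideanSpace ℝ (Fin n) | ∑ i, (x i / a i) ^ 2 < 1} ⊆ Ω)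
    (hΩQ : Ω ⊆ {x : EuclideanSpace ℝ (Fin n) | ∀ i, |x i| ≤ a i * n}) :
    μH[((n : ℝ) - 1)] (frontier Ω) ≤
      ENNReal.ofReal ((2 * n : ℝ) ^ n /
          (volume (Metric.ball (0 : EuclideanSpace ℝ (Fin (n - 1))) 1)).toReal) *
        ⨆ (V : AffineSubspace ℝ (EuclideanSpace ℝ (Fin n)))
          (_ : Module.finrank ℝ V.direction = n - 1),
          μH[((n : ℝ) - 1)] (Ω ∩ (V : Set (EuclideanSpace ℝ (Fin n)))) := by
  classical
  obtain ⟨m, rfl⟩ : ∃ m, n = m + 1 := ⟨n - 1, by omega⟩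
  have hdcast : ((m + 1 : ℕ) : ℝ) - 1 = (m : ℝ) := by push_cast; ring
  rw [hdcast]
  simp only [Nat.add_sub_cancel]
  set N : ℝ := ((m + 1 : ℕ) : ℝ) with hN
  have hNpos : 0 < N := by positivity
  have hd0 : (0 : ℝ) ≤ (m : ℝ) := by positivity
  -- Hausdorff measure on the (m)-dimensional Euclidean space is a multiple of volume
  obtain ⟨cH, hcH⟩ : ∃ c : ℝ≥0∞,
      (μH[(m : ℝ)] : Measure (EuclideanSpace ℝ (Fin m))) = c • volume := by
    have hfr : Module.finrank ℝ (EuclideanSpace ℝ (Fin m)) = m := finrank_euclideanSpace_fin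
    rw [show ((m : ℕ) : ℝ) = ((Module.finrank ℝ (EuclideanSpace ℝ (Fin m)) : ℕ) : ℝ) by
      rw [hfr]]
    exact ⟨_, Measure.isAddLeftInvariant_eq_smul _ _⟩
  have hμEm : ∀ s : Set (EuclideanSpace ℝ (Fin m)), μH[(m : ℝ)] s = cH * volume s := by
    intro s; rw [hcH]; simp
  -- basic facts
  have hzero : (0 : EuclideanSpace ℝ (Fin (m + 1))) ∈ Ω := by
    apply hJΩ; simp
  have hKconv : Convex ℝ (closure Ω) := hΩc.closure
  have hKcl : IsClosed (closure Ω) := isClosed_closure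
  have hKne : (closure Ω).Nonempty := ⟨0, subset_closure hzero⟩
  set Q' : Set (EuclideanSpace ℝ (Fin (m + 1))) :=
    {x : EuclideanSpace ℝ (Fin (m + 1)) | ∀ i, |x i| ≤ a i * N} with hQ'
  have hcoord : ∀ i : Fin (m + 1), Continuous fun x : EuclideanSpace ℝ (Fin (m + 1)) => x i :=
    fun i => (EuclideanSpace.proj i).continuous
  have hQclosed : IsClosed Q' := by
    have : Q' = ⋂ i, {x : EuclideanSpace ℝ (Fin (m + 1)) | |x i| ≤ a i * N} := by
      ext x; simp [hQ', Set.mem_iInter]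
    rw [this]
    exact isClosed_iInter fun i => isClosed_le ((hcoord i).abs) continuous_const
  have hKQ : closure Ω ⊆ Q' := closure_minimal hΩQ hQclosed
  obtain ⟨proj, hlip, hspec, huniq⟩ := proj_exists hKne hKconv hKcl
  -- frontier Ω is contained in the image of the frontier of the box
  have hfrsub : frontier Ω ⊆ proj '' frontier Q' := by
    intro x hx
    have hxK : x ∈ closure Ω := hx.1
    have hxΩ : x ∉ Ω := fun h => hx.2 (by rwa [hΩo.interior_eq])
    obtain ⟨f, hf⟩ := geometric_hahn_banach_open_point hΩc hΩo hxΩ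
    set ν : EuclideanSpace ℝ (Fin (m + 1)) :=
      (InnerProductSpace.toDual ℝ (EuclideanSpace ℝ (Fin (m + 1)))).symm f with hνdef
    have hνinner : ∀ z : EuclideanSpace ℝ (Fin (m + 1)), ⟪ν, z⟫ = f z := fun z =>
      InnerProductSpace.toDual_symm_apply
    have hfx : 0 < f x := by
      have := hf 0 hzero
      simpa using this
    have hν0 : ν ≠ 0 := by
      intro h
      have : f x = 0 := by rw [← hνinner x, h, inner_zero_left]
      linarith
    have hfK : ∀ w ∈ closure Ω, f w ≤ f x := by
      intro w hw
      have : closure Ω ⊆ {z : EuclideanSpace ℝ (Fin (m + 1)) | f z ≤ f x} :=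
        closure_minimal (fun z hz => le_of_lt (hf z hz))
          (isClosed_le f.continuous continuous_const)
      exact this hw
    set ℓ : ℝ → EuclideanSpace ℝ (Fin (m + 1)) := fun t => x + t • ν with hℓ
    have hℓcont : Continuous ℓ := continuous_const.add (continuous_id.smul continuous_const)
    have hℓ0 : ℓ 0 = x := by simp [hℓ]
    set S : Set ℝ := {t : ℝ | 0 ≤ t ∧ ℓ t ∈ Q'} with hS
    have hS0 : (0 : ℝ) ∈ S := ⟨le_refl 0, by rw [hℓ0]; exact hKQ hxK⟩
    have hSclosed : IsClosed S :=
      (isClosed_Ici.preimage continuous_id).inter (hQclosed.preimage hℓcont)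
    obtain ⟨i₀, hi₀⟩ : ∃ i, ν i ≠ 0 := by
      by_contra h
      push_neg at h
      exact hν0 (by ext i; exact h i)
    have hSbdd : BddAbove S := by
      refine ⟨(a i₀ * N + |x i₀|) / |ν i₀|, fun t ht => ?_⟩
      have h1 : |x i₀ + t * ν i₀| ≤ a i₀ * N := by
        have := ht.2 i₀
        simpa [hℓ, PiLp.add_apply, PiLp.smul_apply, smul_eq_mul] using this
      have h2 : |t * ν i₀| ≤ a i₀ * N + |x i₀| := by
        have h3 := abs_add_le (x i₀ + t * ν i₀) (-(x i₀))
        have h4 : x i₀ + t * ν i₀ + -x i₀ = t * ν i₀ := by ring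
        rw [h4, abs_neg] at h3
        linarith
      rw [abs_mul] at h2
      rw [le_div_iff₀ (abs_pos.2 hi₀)]
      nlinarith [le_abs_self t, abs_nonneg t, abs_pos.2 hi₀]
    have ht₀S : sSup S ∈ S := hSclosed.csSup_mem ⟨0, hS0⟩ hSbdd
    have hyQ : ℓ (sSup S) ∈ Q' := ht₀S.2
    have hynotint : ℓ (sSup S) ∉ interior Q' := by
      intro hin
      have hopen : IsOpen (ℓ ⁻¹' interior Q') := isOpen_interior.preimage hℓcont
      obtain ⟨ε, hε, hball⟩ := Metric.isOpen_iff.1 hopen (sSup S) hin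
      have hmem : sSup S + ε / 2 ∈ S := by
        constructor
        · linarith [ht₀S.1]
        · refine interior_subset (hball ?_)
          simp only [Metric.mem_ball, Real.dist_eq, add_sub_cancel_left]
          rw [abs_of_pos (by linarith)]
          linarith
      have := le_csSup hSbdd hmem
      linarith
    have hyfr : ℓ (sSup S) ∈ frontier Q' := by
      rw [frontier, hQclosed.closure_eq]
      exact ⟨hyQ, hynotint⟩
    refine ⟨ℓ (sSup S), hyfr, ?_⟩
    apply huniq _ _ hxK
    intro w hw
    have hsub : ℓ (sSup S) - x = sSup S • ν := by simp [hℓ]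
    rw [hsub, real_inner_smul_left]
    have hiw : ⟪ν, w - x⟫ = f w - f x := by rw [hνinner, map_sub]
    rw [hiw]
    exact mul_nonpos_of_nonneg_of_nonpos ht₀S.1 (by linarith [hfK w hw])
  -- face bounds
  set Pa : ℝ := ∏ j : Fin (m + 1), a j with hPa
  have hPapos : 0 < Pa := Finset.prod_pos fun j _ => ha j
  have halast : 0 < a (Fin.last m) := ha _
  set R : ℝ := (2 * N) ^ m * (Pa / a (Fin.last m)) with hR
  have hRpos : 0 < R := by positivity
  have hfacebound : ∀ (i : Fin (m + 1)) (c0 : ℝ),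
      μH[(m : ℝ)] {x : EuclideanSpace ℝ (Fin (m + 1)) | (∀ j, |x j| ≤ a j * N) ∧ x i = c0} ≤
        cH * ENNReal.ofReal R := by
    intro i c0
    set box : Set (EuclideanSpace ℝ (Fin m)) :=
      {y : EuclideanSpace ℝ (Fin m) | ∀ j, |y j| ≤ a (i.succAbove j) * N} with hbox
    have hsub : {x : EuclideanSpace ℝ (Fin (m + 1)) | (∀ j, |x j| ≤ a j * N) ∧ x i = c0} ⊆
        emb m i c0 '' box := by
      rintro x ⟨hx1, hx2⟩
      refine ⟨(WithLp.equiv 2 (Fin m → ℝ)).symm fun j => x (i.succAbove j), ?_, ?_⟩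
      · intro j
        simpa [WithLp.equiv_symm_apply] using hx1 (i.succAbove j)
      · apply (WithLp.equiv 2 (Fin (m + 1) → ℝ)).injective
        funext j
        rcases eq_or_ne j i with rfl | hne
        · change (emb m _ c0 _).ofLp _ = x.ofLp _
          rw [emb_apply_same]
          exact hx2.symm
        · obtain ⟨k, rfl⟩ := Fin.exists_succAbove_eq hne
          change (emb m _ c0 _).ofLp _ = x.ofLp _
          rw [emb_apply_succAbove]
          simp [WithLp.equiv_symm_apply]
    have hvolbox : volume box = ∏ j : Fin m, ENNReal.ofReal (2 * (a (i.succAbove j) * N)) :=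
      vol_box m fun j => a (i.succAbove j) * N
    have hprodle : ∏ j : Fin m, (2 * (a (i.succAbove j) * N)) ≤ R := by
      have hprodeq : ∏ j : Fin m, (2 * (a (i.succAbove j) * N)) =
          (2 * N) ^ m * ∏ j : Fin m, a (i.succAbove j) := by
        calc ∏ j : Fin m, (2 * (a (i.succAbove j) * N))
            = ∏ j : Fin m, ((2 * N) * a (i.succAbove j)) :=
              Finset.prod_congr rfl fun j _ => by ring
          _ = (∏ _j : Fin m, (2 * N)) * ∏ j : Fin m, a (i.succAbove j) :=
              Finset.prod_mul_distrib
          _ = (2 * N) ^ m * ∏ j : Fin m, a (i.succAbove j) := by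
              rw [Finset.prod_const, Finset.card_univ, Fintype.card_fin]
      have hsucc : ∏ j : Fin m, a (i.succAbove j) = Pa / a i := by
        rw [hPa, eq_div_iff (ha i).ne', mul_comm]
        exact (Fin.prod_univ_succAbove a i).symm
      rw [hprodeq, hsucc, hR]
      have hdivle : Pa / a i ≤ Pa / a (Fin.last m) :=
        div_le_div_of_nonneg_left hPapos.le halast (hmono i (Fin.last m) (Fin.le_last i))
      have h2N : (0:ℝ) ≤ (2 * N) ^ m := by positivity
      exact mul_le_mul_of_nonneg_left hdivle h2N
    calc μH[(m : ℝ)] {x : EuclideanSpace ℝ (Fin (m + 1)) | (∀ j, |x j| ≤ a j * N) ∧ x i = c0}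
        ≤ μH[(m : ℝ)] (emb m i c0 '' box) := measure_mono hsub
      _ = μH[(m : ℝ)] box := (emb_isometry m i c0).hausdorffMeasure_image (Or.inl hd0) box
      _ = cH * volume box := hμEm box
      _ = cH * ∏ j : Fin m, ENNReal.ofReal (2 * (a (i.succAbove j) * N)) := by rw [hvolbox]
      _ ≤ cH * ENNReal.ofReal R := by
          gcongr
          rw [← ENNReal.ofReal_prod_of_nonneg (fun j _ =>
            mul_nonneg (by norm_num) (mul_nonneg (ha _).le hNpos.le))]
          exact ENNReal.ofReal_le_ofReal hprodle
  -- frontier of box covered by faces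
  have hfrQ : frontier Q' ⊆ ⋃ i : Fin (m + 1),
      ({x : EuclideanSpace ℝ (Fin (m + 1)) | (∀ j, |x j| ≤ a j * N) ∧ x i = a i * N} ∪
       {x : EuclideanSpace ℝ (Fin (m + 1)) | (∀ j, |x j| ≤ a j * N) ∧ x i = -(a i * N)}) := by
    intro y hy
    have hyQQ : y ∈ Q' := by
      have h := hy.1; rwa [hQclosed.closure_eq] at h
    have hynot : y ∉ interior Q' := hy.2
    have hex : ∃ i, |y i| = a i * N := by
      by_contra h
      push_neg at h
      have hlt : ∀ i, |y i| < a i * N := fun i => lt_of_le_of_ne (hyQQ i) (h i)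
      apply hynot
      have hopeq : {x : EuclideanSpace ℝ (Fin (m + 1)) | ∀ i, |x i| < a i * N} =
          ⋂ i, {x : EuclideanSpace ℝ (Fin (m + 1)) | |x i| < a i * N} := by
        ext x; simp [Set.mem_iInter]
      have hopen : IsOpen {x : EuclideanSpace ℝ (Fin (m + 1)) | ∀ i, |x i| < a i * N} := by
        rw [hopeq]
        exact isOpen_iInter_of_finite fun i => isOpen_lt ((hcoord i).abs) continuous_const
      have hsubQ : {x : EuclideanSpace ℝ (Fin (m + 1)) | ∀ i, |x i| < a i * N} ⊆ Q' := by
        intro x hx i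
        exact (hx i).le
      exact interior_maximal hsubQ hopen hlt
    obtain ⟨i, hi⟩ := hex
    rcases (abs_eq (mul_nonneg (ha i).le hNpos.le)).1 hi with h | h
    · exact Set.mem_iUnion.2 ⟨i, Or.inl ⟨hyQQ, h⟩⟩
    · exact Set.mem_iUnion.2 ⟨i, Or.inr ⟨hyQQ, h⟩⟩
  -- LHS bound
  have hLHS : μH[(m : ℝ)] (frontier Ω) ≤ cH * ENNReal.ofReal (2 * N * R) := by
    calc μH[(m : ℝ)] (frontier Ω)
        ≤ μH[(m : ℝ)] (proj '' frontier Q') := measure_mono hfrsub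
      _ ≤ (1 : ℝ≥0) ^ (m : ℝ) * μH[(m : ℝ)] (frontier Q') :=
          hlip.hausdorffMeasure_image_le hd0 _
      _ = μH[(m : ℝ)] (frontier Q') := by simp
      _ ≤ ∑ i : Fin (m + 1), μH[(m : ℝ)]
          ({x : EuclideanSpace ℝ (Fin (m + 1)) | (∀ j, |x j| ≤ a j * N) ∧ x i = a i * N} ∪
           {x : EuclideanSpace ℝ (Fin (m + 1)) | (∀ j, |x j| ≤ a j * N) ∧ x i = -(a i * N)}) :=
          (measure_mono hfrQ).trans (measure_iUnion_fintype_le _ _)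
      _ ≤ ∑ _i : Fin (m + 1), (cH * ENNReal.ofReal R + cH * ENNReal.ofReal R) :=
          Finset.sum_le_sum fun i _ =>
            (measure_union_le _ _).trans (add_le_add (hfacebound i _) (hfacebound i _))
      _ = (m + 1) • (cH * ENNReal.ofReal R + cH * ENNReal.ofReal R) := by
          rw [Finset.sum_const, Finset.card_univ, Fintype.card_fin]
      _ = cH * ENNReal.ofReal (2 * N * R) := by
          have hsc : 2 * N * R = ((m + 1 : ℕ) : ℝ) * (R + R) := by rw [hN]; ring
          rw [nsmul_eq_mul, hsc,
            ENNReal.ofReal_mul (p := ((m + 1 : ℕ) : ℝ)) (by positivity),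
            ENNReal.ofReal_natCast, ENNReal.ofReal_add hRpos.le hRpos.le]
          ring
  -- subspace section
  set φ : EuclideanSpace ℝ (Fin (m + 1)) →ₗ[ℝ] ℝ :=
    (EuclideanSpace.proj (Fin.last m) : EuclideanSpace ℝ (Fin (m + 1)) →L[ℝ] ℝ).toLinearMap
    with hφ
  have hφapp : ∀ x : EuclideanSpace ℝ (Fin (m + 1)), φ x = x (Fin.last m) := fun x => rfl
  set V : AffineSubspace ℝ (EuclideanSpace ℝ (Fin (m + 1))) :=
    AffineSubspace.mk' 0 (LinearMap.ker φ) with hV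
  have hVdir : Module.finrank ℝ V.direction = m := by
    rw [hV, AffineSubspace.direction_mk']
    have hsurj : Function.Surjective φ := fun c =>
      ⟨EuclideanSpace.single (Fin.last m) c, by
        rw [hφapp]; simp [EuclideanSpace.single_apply]⟩
    have h1 := LinearMap.finrank_range_add_finrank_ker φ
    rw [LinearMap.range_eq_top.2 hsurj, finrank_top] at h1
    have h2 : Module.finrank ℝ (EuclideanSpace ℝ (Fin (m + 1))) = m + 1 :=
      finrank_euclideanSpace_fin
    have h3 : Module.finrank ℝ ℝ = 1 := Module.finrank_self ℝ
    omega
  have hmemV : ∀ x : EuclideanSpace ℝ (Fin (m + 1)), x ∈ V ↔ x (Fin.last m) = 0 := by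
    intro x
    rw [hV, AffineSubspace.mem_mk']
    rw [vsub_eq_sub, sub_zero, LinearMap.mem_ker, hφapp]
  have hcastprod : ∏ j : Fin m, a (Fin.castSucc j) = Pa / a (Fin.last m) := by
    rw [hPa, eq_div_iff halast.ne']
    exact (Fin.prod_univ_castSucc a).symm
  have hsec : emb m (Fin.last m) 0 ''
      {y : EuclideanSpace ℝ (Fin m) | ∑ j, (y j / a (Fin.castSucc j)) ^ 2 < 1} ⊆
      Ω ∩ (V : Set (EuclideanSpace ℝ (Fin (m + 1)))) := by
    rintro _ ⟨y, hy, rfl⟩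
    constructor
    · apply hJΩ
      simp only [Set.mem_setOf_eq]
      have hsum : ∑ i : Fin (m + 1), (emb m (Fin.last m) 0 y i / a i) ^ 2
          = ∑ j : Fin m, (y j / a (Fin.castSucc j)) ^ 2 := by
        rw [Fin.sum_univ_succAbove (fun i => (emb m (Fin.last m) 0 y i / a i) ^ 2) (Fin.last m)]
        simp [emb_apply_same, emb_apply_succAbove, Fin.succAbove_last]
      rw [hsum]
      exact hy
    · rw [AffineSubspace.mem_coe, hmemV]
      exact emb_apply_same m (Fin.last m) 0 y
  have hsecL : cH * (ENNReal.ofReal (Pa / a (Fin.last m)) *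
      volume (Metric.ball (0 : EuclideanSpace ℝ (Fin m)) 1)) ≤
      μH[(m : ℝ)] (Ω ∩ (V : Set (EuclideanSpace ℝ (Fin (m + 1))))) := by
    have hv := vol_ellipsoid m (fun j => a (Fin.castSucc j)) (fun j => ha _)
    calc cH * (ENNReal.ofReal (Pa / a (Fin.last m)) *
        volume (Metric.ball (0 : EuclideanSpace ℝ (Fin m)) 1))
        = cH * volume {y : EuclideanSpace ℝ (Fin m) |
            ∑ j, (y j / a (Fin.castSucc j)) ^ 2 < 1} := by
          rw [hv, hcastprod]
      _ = μH[(m : ℝ)] {y : EuclideanSpace ℝ (Fin m) |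
            ∑ j, (y j / a (Fin.castSucc j)) ^ 2 < 1} := (hμEm _).symm
      _ = μH[(m : ℝ)] (emb m (Fin.last m) 0 ''
            {y : EuclideanSpace ℝ (Fin m) | ∑ j, (y j / a (Fin.castSucc j)) ^ 2 < 1}) :=
          ((emb_isometry m (Fin.last m) 0).hausdorffMeasure_image (Or.inl hd0) _).symm
      _ ≤ μH[(m : ℝ)] (Ω ∩ (V : Set (EuclideanSpace ℝ (Fin (m + 1))))) := measure_mono hsec
  -- ball volume facts
  set ω : ℝ := (volume (Metric.ball (0 : EuclideanSpace ℝ (Fin m)) 1)).toReal with hω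
  have hballfin : volume (Metric.ball (0 : EuclideanSpace ℝ (Fin m)) 1) ≠ ⊤ :=
    measure_ball_lt_top.ne
  have hballeq : volume (Metric.ball (0 : EuclideanSpace ℝ (Fin m)) 1) = ENNReal.ofReal ω :=
    (ENNReal.ofReal_toReal hballfin).symm
  have hωpos : 0 < ω :=
    ENNReal.toReal_pos (Metric.measure_ball_pos _ _ one_pos).ne' hballfin
  -- final computation
  have hstep : cH * ENNReal.ofReal (2 * N * R) =
      ENNReal.ofReal ((2 * N) ^ (m + 1) / ω) *
        (cH * (ENNReal.ofReal (Pa / a (Fin.last m)) *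
          volume (Metric.ball (0 : EuclideanSpace ℝ (Fin m)) 1))) := by
    rw [hballeq]
    have hreal : 2 * N * R = (2 * N) ^ (m + 1) / ω * (Pa / a (Fin.last m) * ω) := by
      rw [hR]
      field_simp
      ring
    rw [hreal]
    rw [ENNReal.ofReal_mul (p := (2 * N) ^ (m + 1) / ω)
        (div_nonneg (by positivity) hωpos.le),
      ENNReal.ofReal_mul (p := Pa / a (Fin.last m)) (div_nonneg hPapos.le halast.le)]
    ring
  calc μH[(m : ℝ)] (frontier Ω)
      ≤ cH * ENNReal.ofReal (2 * N * R) := hLHS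
    _ = ENNReal.ofReal ((2 * N) ^ (m + 1) / ω) *
        (cH * (ENNReal.ofReal (Pa / a (Fin.last m)) *
          volume (Metric.ball (0 : EuclideanSpace ℝ (Fin m)) 1))) := hstep
    _ ≤ ENNReal.ofReal ((2 * N) ^ (m + 1) / ω) *
        μH[(m : ℝ)] (Ω ∩ (V : Set (EuclideanSpace ℝ (Fin (m + 1))))) :=
        mul_le_mul_right hsecL _
    _ ≤ ENNReal.ofReal ((2 * N) ^ (m + 1) / ω) *
        ⨆ (V' : AffineSubspace ℝ (EuclideanSpace ℝ (Fin (m + 1))))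
          (_ : Module.finrank ℝ V'.direction = m),
          μH[(m : ℝ)] (Ω ∩ (V' : Set (EuclideanSpace ℝ (Fin (m + 1))))) :=
        mul_le_mul_right
          (le_iSup₂ (f := fun (V' : AffineSubspace ℝ (EuclideanSpace ℝ (Fin (m + 1))))
            (_ : Module.finrank ℝ V'.direction = m) =>
            μH[(m : ℝ)] (Ω ∩ (V' : Set (EuclideanSpace ℝ (Fin (m + 1)))))) V hVdir) _
end

section
/- Let g(x) = √(1-x²) and f_k(x) = (1/k)(1+cos(k²πx)) for an integer k ≥ 2, and let Ω_k = {(x,y) : -1 < x < 1, -g(x) < y < g(x) + f_k(x)}. Then the arc length of the curve y = g(x) + f_k(x) over (-1,1) is at least 2k. In particular, the perimeter |∂Ω_k| ≥ 2k, so |∂Ω_k|/√|Ω_k| → ∞ as k → ∞ while Ω_k ⊆ the disk of radius 3 (so areas are uniformly bounded). -/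
open Real Set ENNReal

/-- With `g(x)=√(1-x²)`, `f_k(x)=(1/k)(1+cos(k²πx))` and
`Ω_k = {(x,y) : -1 < x < 1, -g(x) < y < g(x)+f_k(x)}` (for `k ≥ 2`), the arc length of the
upper boundary curve `y = g(x)+f_k(x)` over `(-1,1)` is at least `2k`; moreover
`Ω_k` is contained in the disk of radius `3` (so the areas are uniformly bounded while
`|∂Ω_k|/√|Ω_k| → ∞`). -/
theorem stmt8 (k : ℕ) (hk : 2 ≤ k) (g f : ℝ → ℝ)
    (hg : ∀ x, g x = Real.sqrt (1 - x ^ 2))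
    (hf : ∀ x, f x = (1 / k) * (1 + Real.cos (k ^ 2 * π * x)))
    (Ω : Set (ℝ × ℝ))
    (hΩ : Ω = {p : ℝ × ℝ | p.1 ∈ Ioo (-1 : ℝ) 1 ∧ p.2 ∈ Ioo (-g p.1) (g p.1 + f p.1)}) :
    ((2 * k : ℕ) : ℝ≥0∞) ≤ eVariationOn (fun x : ℝ => (x, g x + f x)) (Ioo (-1 : ℝ) 1) ∧
    Ω ⊆ Metric.ball (0 : ℝ × ℝ) 3 := by
  have hkR : (2 : ℝ) ≤ (k : ℝ) := by exact_mod_cast hk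
  have hkpos : (0 : ℝ) < (k : ℝ) := by linarith
  -- basic facts about g
  have g0 : ∀ x, 0 ≤ g x := fun x => by rw [hg]; exact Real.sqrt_nonneg _
  have g1 : ∀ x, g x ≤ 1 := fun x => by
    rw [hg]
    exact Real.sqrt_le_one.mpr (by nlinarith [sq_nonneg x])
  have gmono_neg : ∀ a b : ℝ, a ≤ b → b ≤ 0 → g a ≤ g b := by
    intro a b hab hb0
    rw [hg, hg]
    exact Real.sqrt_le_sqrt (by nlinarith)
  have gmono_pos : ∀ a b : ℝ, 0 ≤ a → a ≤ b → g b ≤ g a := by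
    intro a b ha0 hab
    rw [hg, hg]
    exact Real.sqrt_le_sqrt (by nlinarith)
  have fle : ∀ x, f x ≤ 2 / k := by
    intro x
    rw [hf]
    have h1 : Real.cos ((k : ℝ) ^ 2 * π * x) ≤ 1 := Real.cos_le_one _
    have h2 : (0 : ℝ) < 1 / k := by positivity
    calc (1 / (k : ℝ)) * (1 + Real.cos ((k:ℝ) ^ 2 * π * x)) ≤ (1 / k) * 2 := by nlinarith
      _ = 2 / k := by ring
  constructor
  · -- variation bound
    set m : ℕ := k ^ 2 - 1 with hm
    have hm1 : 1 ≤ k ^ 2 := by nlinarith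
    have hmR : (m : ℝ) = (k : ℝ) ^ 2 - 1 := by
      rw [hm]
      push_cast [Nat.cast_sub hm1]
      ring
    have hmRpos : (0 : ℝ) < (m : ℝ) := by nlinarith
    set v : ℕ → ℝ := fun i => ((i : ℝ) - m) / (k : ℝ) ^ 2 with hv
    have hvmono : Monotone v := by
      intro a b hab
      apply div_le_div_of_nonneg_right ?_ (by positivity)
      · simp only [sub_le_sub_iff_right]
        exact_mod_cast hab
    have hvmem : ∀ i, i ≤ 2 * m → v i ∈ Ioo (-1 : ℝ) 1 := by
      intro i hi
      have hiR : (i : ℝ) ≤ 2 * m := by exact_mod_cast hi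
      constructor
      · rw [hv]
        rw [lt_div_iff₀ (by positivity : (0:ℝ) < (k:ℝ)^2)]
        have : (0:ℝ) ≤ (i:ℝ) := Nat.cast_nonneg i
        nlinarith
      · rw [hv]
        rw [div_lt_iff₀ (by positivity : (0:ℝ) < (k:ℝ)^2)]
        nlinarith
    set u : ℕ → ℝ := fun i => v (min i (2 * m)) with hu
    have humono : Monotone u := fun a b hab => hvmono (min_le_min_right _ hab)
    have humem : ∀ i, u i ∈ Ioo (-1 : ℝ) 1 := fun i => hvmem _ (min_le_right _ _)
    have key := eVariationOn.sum_le (f := fun x : ℝ => (x, g x + f x)) (n := 2 * m) humono humem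
    refine le_trans ?_ key
    -- value of f at the sample points
    have hfv : ∀ i : ℕ, f (v i) = 1 / k + (1 / k) * (-1 : ℝ) ^ ((i : ℤ) - (m : ℤ)) := by
      intro i
      have harg : (k : ℝ) ^ 2 * π * v i = (((i : ℤ) - (m : ℤ) : ℤ) : ℝ) * π := by
        rw [hv]
        push_cast
        field_simp
      rw [hf, harg]
      have := Real.cos_int_mul_pi_sub 0 ((i : ℤ) - (m : ℤ))
      simp only [sub_zero, Real.cos_zero, mul_one] at this
      rw [this]
      ring
    -- the oscillation of f between consecutive sample points
    have hdf : ∀ i : ℕ, |f (v (i + 1)) - f (v i)| = 2 / k := by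
      intro i
      rw [hfv, hfv]
      have h1 : ((i + 1 : ℕ) : ℤ) - (m : ℤ) = ((i : ℤ) - (m : ℤ)) + 1 := by push_cast; ring
      rw [h1, zpow_add_one₀ (by norm_num : (-1:ℝ) ≠ 0)]
      have : 1 / (k:ℝ) + 1 / k * ((-1:ℝ) ^ ((i:ℤ) - (m:ℤ)) * -1) -
          (1 / k + 1 / k * (-1:ℝ) ^ ((i:ℤ) - (m:ℤ)))
          = -(2 / k) * (-1:ℝ) ^ ((i:ℤ) - (m:ℤ)) := by ring
      rw [this, abs_mul]
      have habs : |(-1:ℝ) ^ ((i:ℤ) - (m:ℤ))| = 1 := by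
        rcases Int.even_or_odd ((i:ℤ) - (m:ℤ)) with he | ho
        · rw [he.neg_one_zpow]; norm_num
        · rw [ho.neg_one_zpow]; norm_num
      rw [habs, mul_one, abs_neg, abs_of_pos (by positivity)]
    -- sign of v
    have hvneg : ∀ i, i ≤ m → v i ≤ 0 := by
      intro i hi
      rw [hv]
      apply div_nonpos_of_nonpos_of_nonneg _ (by positivity)
      have : (i : ℝ) ≤ (m : ℝ) := by exact_mod_cast hi
      linarith
    have hvpos : ∀ i, m ≤ i → 0 ≤ v i := by
      intro i hi
      rw [hv]
      apply div_nonneg _ (by positivity)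
      have : (m : ℝ) ≤ (i : ℝ) := by exact_mod_cast hi
      linarith
    -- bound the variation of g over the sample points
    have hgsum1 : ∑ i ∈ Finset.range m, |g (v (i + 1)) - g (v i)| ≤ 1 := by
      have : ∀ i ∈ Finset.range m, |g (v (i + 1)) - g (v i)| = g (v (i + 1)) - g (v i) := by
        intro i hi
        rw [Finset.mem_range] at hi
        have := gmono_neg (v i) (v (i + 1)) (hvmono (Nat.le_succ i)) (hvneg _ hi)
        exact abs_of_nonneg (by linarith)
      rw [Finset.sum_congr rfl this, Finset.sum_range_sub (fun i => g (v i)) m]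
      have := g1 (v m); have := g0 (v 0); linarith
    have hgsum2 : ∑ i ∈ Finset.range m, |g (v (m + i + 1)) - g (v (m + i))| ≤ 1 := by
      have : ∀ i ∈ Finset.range m, |g (v (m + i + 1)) - g (v (m + i))|
          = g (v (m + i)) - g (v (m + i + 1)) := by
        intro i hi
        have := gmono_pos (v (m + i)) (v (m + i + 1)) (hvpos _ (Nat.le_add_right _ _))
          (hvmono (Nat.le_succ _))
        rw [abs_sub_comm]
        exact abs_of_nonneg (by linarith)
      rw [Finset.sum_congr rfl this]
      have h2 := Finset.sum_range_sub' (fun i => g (v (m + i))) m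
      have hrw : ∀ i ∈ Finset.range m,
          g (v (m + i)) - g (v (m + i + 1)) = (fun j => g (v (m + j))) i - (fun j => g (v (m + j))) (i + 1) := by
        intro i _; simp [Nat.add_assoc]
      rw [Finset.sum_congr rfl hrw, h2]
      have := g1 (v m); have := g0 (v (m + m)); simp only [Nat.add_zero]; linarith
    -- the real-valued lower bound
    have hreal : (2 * k : ℝ) ≤ ∑ i ∈ Finset.range (2 * m), |g (v (i + 1)) + f (v (i + 1)) - (g (v i) + f (v i))| := by
      have hterm : ∀ i ∈ Finset.range (2 * m),
          2 / (k : ℝ) - |g (v (i + 1)) - g (v i)| ≤ |g (v (i + 1)) + f (v (i + 1)) - (g (v i) + f (v i))| := by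
        intro i _
        have h1 : |f (v (i + 1)) - f (v i)| - |g (v (i + 1)) - g (v i)|
            ≤ |(f (v (i + 1)) - f (v i)) + (g (v (i + 1)) - g (v i))| := by
          have := abs_add_le ((f (v (i + 1)) - f (v i)) + (g (v (i + 1)) - g (v i))) (-(g (v (i + 1)) - g (v i)))
          simp only [add_neg_cancel_right, abs_neg] at this
          linarith
        rw [hdf] at h1
        have heq : (f (v (i + 1)) - f (v i)) + (g (v (i + 1)) - g (v i))
            = g (v (i + 1)) + f (v (i + 1)) - (g (v i) + f (v i)) := by ring
        rw [heq] at h1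
        exact h1
      have hsum := Finset.sum_le_sum hterm
      rw [Finset.sum_sub_distrib, Finset.sum_const, Finset.card_range] at hsum
      have hgsplit : ∑ i ∈ Finset.range (2 * m), |g (v (i + 1)) - g (v i)| ≤ 2 := by
        have := Finset.sum_range_add (fun i => |g (v (i + 1)) - g (v i)|) m m
        rw [two_mul, this]
        linarith [hgsum1, hgsum2]
      rw [nsmul_eq_mul] at hsum
      push_cast at hsum
      have : 2 * (k:ℝ) ≤ 2 * (m:ℝ) * (2 / k) - 2 := by
        have ht : (0:ℝ) < (k:ℝ)⁻¹ := inv_pos.mpr hkpos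
        have hkinv : (k:ℝ) * (k:ℝ)⁻¹ = 1 := mul_inv_cancel₀ (ne_of_gt hkpos)
        have h5 : (0:ℝ) ≤ 2 * (k:ℝ)^2 - 2*k - 4 := by nlinarith
        rw [hmR, div_eq_mul_inv]
        nlinarith [mul_nonneg h5 ht.le, hkinv]
      linarith [this, hgsplit, hsum]
    -- pass to extended nonnegative reals
    have hcast : ((2 * k : ℕ) : ℝ≥0∞) = ENNReal.ofReal (2 * k : ℝ) := by
      rw [← ENNReal.ofReal_natCast]
      norm_num
    rw [hcast]
    calc ENNReal.ofReal (2 * k : ℝ)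
        ≤ ENNReal.ofReal (∑ i ∈ Finset.range (2 * m),
            |g (v (i + 1)) + f (v (i + 1)) - (g (v i) + f (v i))|) :=
          ENNReal.ofReal_le_ofReal hreal
      _ = ∑ i ∈ Finset.range (2 * m),
            ENNReal.ofReal |g (v (i + 1)) + f (v (i + 1)) - (g (v i) + f (v i))| :=
          ENNReal.ofReal_sum_of_nonneg (fun i _ => abs_nonneg _)
      _ ≤ ∑ i ∈ Finset.range (2 * m),
            edist ((fun x : ℝ => (x, g x + f x)) (u (i + 1))) ((fun x : ℝ => (x, g x + f x)) (u i)) := by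
          apply Finset.sum_le_sum
          intro i hi
          rw [Finset.mem_range] at hi
          have hui : u i = v i := by rw [hu]; simp only []; rw [min_eq_left (by omega)]
          have hui1 : u (i + 1) = v (i + 1) := by rw [hu]; simp only []; rw [min_eq_left (by omega)]
          rw [Prod.edist_eq]
          refine le_trans ?_ (le_max_right _ _)
          rw [edist_dist, Real.dist_eq, hui, hui1]
  · -- ball containment
    intro p hp
    rw [hΩ] at hp
    obtain ⟨hx, hy⟩ := hp
    obtain ⟨hx1, hx2⟩ := hx
    obtain ⟨hy1, hy2⟩ := hy
    rw [Metric.mem_ball, Prod.dist_eq]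
    have h1 : dist p.1 0 < 3 := by
      rw [Real.dist_eq, sub_zero, abs_lt]; constructor <;> linarith
    have h2 : dist p.2 0 < 3 := by
      rw [Real.dist_eq, sub_zero, abs_lt]
      have hgle := g1 p.1
      have hgge := g0 p.1
      have hfle := fle p.1
      have h2k : 2 / (k : ℝ) ≤ 1 := by rw [div_le_iff₀ hkpos]; linarith
      constructor <;> nlinarith
    exact max_lt h1 h2
end

section
/- Let T ⊆ ℝ² be the open triangle with vertices (-1,0), (0,0), (0,1). Then u(x,y) = sin(π(x+1))·sin(2πy) − sin(2π(x+1))·sin(πy) satisfies −Δu = 5π²·u in T, u = 0 on ∂T, and u > 0 in T. Consequently the first Dirichlet eigenvalue of T is λ₁(T) = 5π². -/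
open Real Set

/-- The Laplacian of a function on `ℝ²`, as the sum of the two unmixed second partial
derivatives. -/
noncomputable def lap2 (v : ℝ × ℝ → ℝ) (p : ℝ × ℝ) : ℝ :=
  iteratedDeriv 2 (fun x => v (x, p.2)) p.1 + iteratedDeriv 2 (fun y => v (p.1, y)) p.2

lemma hsin1 (a x : ℝ) : HasDerivAt (fun x => Real.sin (a * (x + 1))) (a * Real.cos (a * (x + 1))) x := by
  have h : HasDerivAt (fun x : ℝ => a * (x + 1)) a x := by
    simpa using ((hasDerivAt_id x).add_const (1 : ℝ)).const_mul a
  simpa [mul_comm, Function.comp_def] using (Real.hasDerivAt_sin (a * (x + 1))).comp x h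

lemma hcos1 (a x : ℝ) : HasDerivAt (fun x => Real.cos (a * (x + 1))) (-(a * Real.sin (a * (x + 1)))) x := by
  have h : HasDerivAt (fun x : ℝ => a * (x + 1)) a x := by
    simpa using ((hasDerivAt_id x).add_const (1 : ℝ)).const_mul a
  have := (Real.hasDerivAt_cos (a * (x + 1))).comp x h
  simp only [Function.comp_def] at this
  exact this.congr_deriv (by ring)

lemma hsin0 (a y : ℝ) : HasDerivAt (fun y => Real.sin (a * y)) (a * Real.cos (a * y)) y := by
  have h : HasDerivAt (fun y : ℝ => a * y) a y := by
    simpa using (hasDerivAt_id y).const_mul a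
  simpa [mul_comm, Function.comp_def] using (Real.hasDerivAt_sin (a * y)).comp y h

lemma hcos0 (a y : ℝ) : HasDerivAt (fun y => Real.cos (a * y)) (-(a * Real.sin (a * y))) y := by
  have h : HasDerivAt (fun y : ℝ => a * y) a y := by
    simpa using (hasDerivAt_id y).const_mul a
  have := (Real.hasDerivAt_cos (a * y)).comp y h
  simp only [Function.comp_def] at this
  exact this.congr_deriv (by ring)

lemma lemX (a a' c c' x : ℝ) :
    iteratedDeriv 2 (fun x => Real.sin (a * (x + 1)) * c - Real.sin (a' * (x + 1)) * c') x
      = -(a ^ 2) * Real.sin (a * (x + 1)) * c + a' ^ 2 * Real.sin (a' * (x + 1)) * c' := by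
  rw [iteratedDeriv_succ, iteratedDeriv_one]
  have hd : deriv (fun x => Real.sin (a * (x + 1)) * c - Real.sin (a' * (x + 1)) * c')
      = fun x => (a * Real.cos (a * (x + 1))) * c - (a' * Real.cos (a' * (x + 1))) * c' :=
    funext fun x => (((hsin1 a x).mul_const c).sub ((hsin1 a' x).mul_const c')).deriv
  rw [hd]
  have := ((((hcos1 a x).const_mul a).mul_const c).sub (((hcos1 a' x).const_mul a').mul_const c')).deriv
  erw [this]
  ring

lemma lemY (a a' c c' y : ℝ) :
    iteratedDeriv 2 (fun y => c * Real.sin (a * y) - c' * Real.sin (a' * y)) y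
      = -(a ^ 2) * (c * Real.sin (a * y)) + a' ^ 2 * (c' * Real.sin (a' * y)) := by
  rw [iteratedDeriv_succ, iteratedDeriv_one]
  have hd : deriv (fun y => c * Real.sin (a * y) - c' * Real.sin (a' * y))
      = fun y => c * (a * Real.cos (a * y)) - c' * (a' * Real.cos (a' * y)) :=
    funext fun y => (((hsin0 a y).const_mul c).sub ((hsin0 a' y).const_mul c')).deriv
  rw [hd]
  have := ((((hcos0 a y).const_mul a).const_mul c).sub (((hcos0 a' y).const_mul a').const_mul c')).deriv
  erw [this]
  ring

/-- On the open triangle `T` with vertices `(-1,0)`, `(0,0)`, `(0,1)`, the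
function `u(x,y) = sin(π(x+1))sin(2πy) − sin(2π(x+1))sin(πy)` satisfies `−Δu = 5π²u` in `T`,
vanishes on `∂T`, and is positive in `T`.  Consequently (using the characterization of the
first Dirichlet eigenvalue as the unique eigenvalue with a positive eigenfunction) the first
Dirichlet eigenvalue of `T` is `5π²`. -/
theorem stmt9 (T : Set (ℝ × ℝ))
    (hT : T = {p : ℝ × ℝ | -1 < p.1 ∧ p.1 < 0 ∧ 0 < p.2 ∧ p.2 < p.1 + 1})
    (u : ℝ × ℝ → ℝ)
    (hu : u = fun p => Real.sin (π * (p.1 + 1)) * Real.sin (2 * π * p.2)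
      - Real.sin (2 * π * (p.1 + 1)) * Real.sin (π * p.2))
    (lam1 : ℝ)
    (hchar : ∀ (lam : ℝ) (v : ℝ × ℝ → ℝ), ContDiff ℝ 2 v →
      (∀ p ∈ T, -lap2 v p = lam * v p) → (∀ p ∈ frontier T, v p = 0) →
      (∀ p ∈ T, 0 < v p) → lam = lam1) :
    (∀ p ∈ T, -lap2 u p = 5 * π ^ 2 * u p) ∧ (∀ p ∈ frontier T, u p = 0) ∧
    (∀ p ∈ T, 0 < u p) ∧ lam1 = 5 * π ^ 2 := by
  subst hT hu
  -- PDE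
  have hpde : ∀ p : ℝ × ℝ, -lap2 (fun p : ℝ × ℝ => Real.sin (π * (p.1 + 1)) * Real.sin (2 * π * p.2)
      - Real.sin (2 * π * (p.1 + 1)) * Real.sin (π * p.2)) p
      = 5 * π ^ 2 * (Real.sin (π * (p.1 + 1)) * Real.sin (2 * π * p.2)
        - Real.sin (2 * π * (p.1 + 1)) * Real.sin (π * p.2)) := by
    intro p
    unfold lap2
    rw [lemX π (2 * π) (Real.sin (2 * π * p.2)) (Real.sin (π * p.2)) p.1,
      lemY (2 * π) π (Real.sin (π * (p.1 + 1))) (Real.sin (2 * π * (p.1 + 1))) p.2]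
    ring
  -- boundary
  have hbd : ∀ p ∈ frontier {p : ℝ × ℝ | -1 < p.1 ∧ p.1 < 0 ∧ 0 < p.2 ∧ p.2 < p.1 + 1},
      Real.sin (π * (p.1 + 1)) * Real.sin (2 * π * p.2)
        - Real.sin (2 * π * (p.1 + 1)) * Real.sin (π * p.2) = 0 := by
    intro p hp
    have hopen : IsOpen {p : ℝ × ℝ | -1 < p.1 ∧ p.1 < 0 ∧ 0 < p.2 ∧ p.2 < p.1 + 1} := by
      have h1 : IsOpen {p : ℝ × ℝ | -1 < p.1} := isOpen_lt continuous_const continuous_fst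
      have h2 : IsOpen {p : ℝ × ℝ | p.1 < 0} := isOpen_lt continuous_fst continuous_const
      have h3 : IsOpen {p : ℝ × ℝ | 0 < p.2} := isOpen_lt continuous_const continuous_snd
      have h4 : IsOpen {p : ℝ × ℝ | p.2 < p.1 + 1} :=
        isOpen_lt continuous_snd (continuous_fst.add continuous_const)
      exact h1.inter (h2.inter (h3.inter h4))
    have hcl : p ∈ {p : ℝ × ℝ | -1 ≤ p.1 ∧ p.1 ≤ 0 ∧ 0 ≤ p.2 ∧ p.2 ≤ p.1 + 1} := by
      have hclosed : IsClosed {p : ℝ × ℝ | -1 ≤ p.1 ∧ p.1 ≤ 0 ∧ 0 ≤ p.2 ∧ p.2 ≤ p.1 + 1} := by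
        have h1 : IsClosed {p : ℝ × ℝ | -1 ≤ p.1} := isClosed_le continuous_const continuous_fst
        have h2 : IsClosed {p : ℝ × ℝ | p.1 ≤ 0} := isClosed_le continuous_fst continuous_const
        have h3 : IsClosed {p : ℝ × ℝ | 0 ≤ p.2} := isClosed_le continuous_const continuous_snd
        have h4 : IsClosed {p : ℝ × ℝ | p.2 ≤ p.1 + 1} :=
          isClosed_le continuous_snd (continuous_fst.add continuous_const)
        exact h1.inter (h2.inter (h3.inter h4))
      refine closure_minimal (fun q hq => ?_) hclosed (frontier_subset_closure hp)
      exact ⟨hq.1.le, hq.2.1.le, hq.2.2.1.le, hq.2.2.2.le⟩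
    have hnot : p ∉ {p : ℝ × ℝ | -1 < p.1 ∧ p.1 < 0 ∧ 0 < p.2 ∧ p.2 < p.1 + 1} := by
      intro h
      exact hp.2 (by rw [hopen.interior_eq]; exact h)
    obtain ⟨h1, h2, h3, h4⟩ := hcl
    rcases eq_or_lt_of_le h3 with hy0 | hy0
    · rw [← hy0]
      simp
    rcases eq_or_lt_of_le h4 with hy1 | hy1
    · rw [hy1]; ring
    have hx0 : p.1 = 0 := by
      rcases eq_or_lt_of_le h2 with hx | hx
      · exact hx
      exfalso
      exact hnot ⟨by linarith, hx, hy0, hy1⟩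
    rw [hx0]
    norm_num [Real.sin_pi, Real.sin_two_pi]
  -- positivity
  have hpos : ∀ p ∈ {p : ℝ × ℝ | -1 < p.1 ∧ p.1 < 0 ∧ 0 < p.2 ∧ p.2 < p.1 + 1},
      0 < Real.sin (π * (p.1 + 1)) * Real.sin (2 * π * p.2)
        - Real.sin (2 * π * (p.1 + 1)) * Real.sin (π * p.2) := by
    rintro ⟨x, y⟩ ⟨h1, h2, h3, h4⟩
    simp only at h1 h2 h3 h4 ⊢
    have e1 : 2 * π * y = 2 * (π * y) := by ring
    have e2 : 2 * π * (x + 1) = 2 * (π * (x + 1)) := by ring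
    rw [e1, e2, Real.sin_two_mul, Real.sin_two_mul]
    have hπ := Real.pi_pos
    have hs1 : 0 < Real.sin (π * (x + 1)) :=
      Real.sin_pos_of_pos_of_lt_pi (by nlinarith) (by nlinarith)
    have hs2 : 0 < Real.sin (π * y) :=
      Real.sin_pos_of_pos_of_lt_pi (by nlinarith) (by nlinarith)
    have hc : Real.cos (π * (x + 1)) < Real.cos (π * y) :=
      Real.cos_lt_cos_of_nonneg_of_le_pi (by nlinarith) (by nlinarith) (by nlinarith)
    nlinarith [mul_pos (mul_pos hs1 hs2) (sub_pos.mpr hc)]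
  have hcd : ContDiff ℝ 2 (fun p : ℝ × ℝ => Real.sin (π * (p.1 + 1)) * Real.sin (2 * π * p.2)
      - Real.sin (2 * π * (p.1 + 1)) * Real.sin (π * p.2)) := by
    apply ContDiff.sub <;> apply ContDiff.mul <;>
      exact (Real.contDiff_sin.of_le le_top).comp (by fun_prop)
  refine ⟨fun p _ => hpde p, hbd, hpos, ?_⟩
  exact (hchar (5 * π ^ 2) _ hcd (fun p _ => hpde p) hbd hpos).symm
end

section
/- (Mixed eigenvalue upper bound for a rooms-and-passages block.) For an integer j ≥ 0, let T_j ⊆ ℝ² be the union of rectangles (0, 3·2^{-j}) × (0, (1/2)·2^{-3j}) and (2^{-j}, 2·2^{-j}) × (0, 2^{-j}). Let φ_j(x,y) be the piecewise linear function equal to 2ʲx for 0 ≤ x ≤ 2^{-j}, equal to 1 for 2^{-j} ≤ x ≤ 2·2^{-j}, and equal to −2ʲx + 3 for 2·2^{-j} ≤ x ≤ 3·2^{-j}. Then ∫_{T_j} |∇φ_j|² ≤ ∫_{T_j} |φ_j|². Hence the first mixed eigenvalue of T_j (Dirichlet on left and right edges, Neumann elsewhere) is at most 1. -/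
open Real Set MeasureTheory

/-- For the rooms-and-passages block
`T_j = (0, 3·2⁻ʲ)×(0, 2⁻³ʲ/2) ∪ (2⁻ʲ, 2·2⁻ʲ)×(0, 2⁻ʲ)` and the piecewise linear function
`φ_j` (equal to `2ʲx` on `[0,2⁻ʲ]`, to `1` on `[2⁻ʲ, 2·2⁻ʲ]` and to `-2ʲx+3` on
`[2·2⁻ʲ, 3·2⁻ʲ]`, depending only on `x`), one has `∫_{T_j} |∇φ_j|² ≤ ∫_{T_j} φ_j²`; hence
the first mixed (Dirichlet on the left and right edges, Neumann elsewhere) eigenvalue of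
`T_j` is at most `1`. -/
theorem stmt10 (j : ℕ) (r : ℝ) (hr : r = ((2 : ℝ) ^ j)⁻¹) (T : Set (ℝ × ℝ))
    (hT : T = (Ioo 0 (3 * r) ×ˢ Ioo 0 (r ^ 3 / 2)) ∪ (Ioo r (2 * r) ×ˢ Ioo 0 r))
    (φ : ℝ × ℝ → ℝ)
    (hφ : φ = fun p => if p.1 ≤ r then 2 ^ j * p.1
      else if p.1 ≤ 2 * r then 1 else -(2 ^ j) * p.1 + 3) :
    ∫ p in T, ‖fderiv ℝ φ p‖ ^ 2 ≤ ∫ p in T, (φ p) ^ 2 := by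
  have hc0 : (0:ℝ) < 2 ^ j := by positivity
  have hr0 : 0 < r := by rw [hr]; positivity
  have hcr : (2:ℝ) ^ j * r = 1 := by rw [hr]; field_simp
  set c : ℝ := (2:ℝ) ^ j with hc
  -- volumes of product sets
  have hvol : ∀ a b e d : ℝ, volume ((Ioo a b) ×ˢ (Ioo e d))
      = ENNReal.ofReal (b - a) * ENNReal.ofReal (d - e) := by
    intro a b e d
    rw [Measure.volume_eq_prod, Measure.prod_prod, Real.volume_Ioo, Real.volume_Ioo]
  -- T is measurable and of finite volume
  have hTmeas : MeasurableSet T := by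
    rw [hT]
    exact ((measurableSet_Ioo.prod measurableSet_Ioo).union
      (measurableSet_Ioo.prod measurableSet_Ioo))
  have hTfin : volume T < ⊤ := by
    rw [hT]
    refine lt_of_le_of_lt (measure_union_le _ _) ?_
    rw [hvol, hvol]
    exact ENNReal.add_lt_top.2 ⟨ENNReal.mul_lt_top ENNReal.ofReal_lt_top ENNReal.ofReal_lt_top,
      ENNReal.mul_lt_top ENNReal.ofReal_lt_top ENNReal.ofReal_lt_top⟩
  haveI : IsFiniteMeasure (volume.restrict T) :=
    ⟨by rw [Measure.restrict_apply_univ]; exact hTfin⟩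
  -- vertical lines are null
  have hline : ∀ a : ℝ, volume {p : ℝ × ℝ | p.1 = a} = 0 := by
    intro a
    have h : {p : ℝ × ℝ | p.1 = a} = ({a} : Set ℝ) ×ˢ (univ : Set ℝ) := by
      ext p
      constructor
      · intro hp; exact ⟨hp, trivial⟩
      · intro hp; exact hp.1
    rw [h, Measure.volume_eq_prod, Measure.prod_prod, Real.volume_singleton, zero_mul]
  -- norm bound for scalar multiples of fst
  have hnorm : ∀ a : ℝ, ‖a • ContinuousLinearMap.fst ℝ ℝ ℝ‖ ≤ |a| := by
    intro a
    refine ContinuousLinearMap.opNorm_le_bound _ (abs_nonneg a) ?_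
    intro x
    have : ‖(a • ContinuousLinearMap.fst ℝ ℝ ℝ) x‖ = |a| * ‖x.1‖ := by
      simp [abs_mul]
    rw [this]
    exact mul_le_mul_of_nonneg_left (norm_fst_le x) (abs_nonneg a)
  -- fderiv computations on the three open slabs
  have hfd1 : ∀ p : ℝ × ℝ, p.1 < r →
      fderiv ℝ φ p = c • ContinuousLinearMap.fst ℝ ℝ ℝ := by
    intro p hp
    have hopen : IsOpen {q : ℝ × ℝ | q.1 < r} := isOpen_lt continuous_fst continuous_const
    have heq : φ =ᶠ[nhds p] fun q => c * q.1 := by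
      filter_upwards [hopen.mem_nhds hp] with q hq
      rw [hφ]; simp only
      rw [if_pos (le_of_lt hq)]
    rw [heq.fderiv_eq]
    exact (hasFDerivAt_fst.const_mul c).fderiv
  have hfd2 : ∀ p : ℝ × ℝ, r < p.1 → p.1 < 2 * r → fderiv ℝ φ p = 0 := by
    intro p hp1 hp2
    have hopen : IsOpen {q : ℝ × ℝ | r < q.1 ∧ q.1 < 2 * r} := by
      exact (isOpen_lt continuous_const continuous_fst).inter
        (isOpen_lt continuous_fst continuous_const)
    have heq : φ =ᶠ[nhds p] fun _ => (1:ℝ) := by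
      filter_upwards [hopen.mem_nhds ⟨hp1, hp2⟩] with q hq
      rw [hφ]; simp only
      rw [if_neg (not_le.2 hq.1), if_pos (le_of_lt hq.2)]
    rw [heq.fderiv_eq]
    exact fderiv_const_apply 1
  have hfd3 : ∀ p : ℝ × ℝ, 2 * r < p.1 →
      fderiv ℝ φ p = (-c) • ContinuousLinearMap.fst ℝ ℝ ℝ := by
    intro p hp
    have hopen : IsOpen {q : ℝ × ℝ | 2 * r < q.1} := isOpen_lt continuous_const continuous_fst
    have heq : φ =ᶠ[nhds p] fun q => -c * q.1 + 3 := by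
      filter_upwards [hopen.mem_nhds hp] with q hq
      rw [hφ]; simp only
      rw [if_neg (not_le.2 (lt_trans (by linarith) hq)), if_neg (not_le.2 hq)]
    rw [heq.fderiv_eq]
    have hder : HasFDerivAt (fun q : ℝ × ℝ => -c * q.1 + 3)
        ((-c) • ContinuousLinearMap.fst ℝ ℝ ℝ) p :=
      (hasFDerivAt_fst.const_mul (-c)).add_const 3
    exact hder.fderiv
  -- the majorant
  set S : Set (ℝ × ℝ) := {p : ℝ × ℝ | p.1 < r ∨ 2 * r < p.1} with hS
  have hSmeas : MeasurableSet S :=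
    (measurableSet_lt measurable_fst measurable_const).union
      (measurableSet_lt measurable_const measurable_fst)
  set h : ℝ × ℝ → ℝ := S.indicator (fun _ => c ^ 2) with hh
  have hh_nonneg : ∀ p, 0 ≤ h p := by
    intro p; exact Set.indicator_nonneg (fun _ _ => by positivity) p
  have hh_le : ∀ p, h p ≤ c ^ 2 := by
    intro p
    refine Set.indicator_le' (fun _ _ => le_refl _) (fun _ _ => by positivity) p
  -- a.e. pointwise bound
  have hae : ∀ᵐ p : ℝ × ℝ, ‖fderiv ℝ φ p‖ ^ 2 ≤ h p := by
    have h1 : ∀ᵐ p : ℝ × ℝ, p.1 ≠ r := by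
      rw [ae_iff]
      convert hline r using 2
      ext p; simp
    have h2 : ∀ᵐ p : ℝ × ℝ, p.1 ≠ 2 * r := by
      rw [ae_iff]
      convert hline (2 * r) using 2
      ext p; simp
    filter_upwards [h1, h2] with p hp1 hp2
    rcases lt_trichotomy p.1 r with hlt | heq | hgt
    · rw [hfd1 p hlt]
      have hmem : p ∈ S := Or.inl hlt
      rw [hh, Set.indicator_of_mem hmem]
      have := hnorm c
      rw [abs_of_pos hc0] at this
      calc ‖c • ContinuousLinearMap.fst ℝ ℝ ℝ‖ ^ 2 ≤ c ^ 2 := by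
            exact pow_le_pow_left₀ (norm_nonneg _) this 2
        _ = c ^ 2 := rfl
    · exact absurd heq hp1
    · rcases lt_trichotomy p.1 (2 * r) with hlt2 | heq2 | hgt2
      · rw [hfd2 p hgt hlt2]
        simpa using hh_nonneg p
      · exact absurd heq2 hp2
      · rw [hfd3 p hgt2]
        have hmem : p ∈ S := Or.inr hgt2
        rw [hh, Set.indicator_of_mem hmem]
        have := hnorm (-c)
        rw [abs_neg, abs_of_pos hc0] at this
        exact pow_le_pow_left₀ (norm_nonneg _) this 2
  -- measurability / integrability of the gradient term
  have hgmeas : Measurable fun p : ℝ × ℝ => ‖fderiv ℝ φ p‖ ^ 2 :=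
    ((measurable_fderiv ℝ φ).norm).pow_const 2
  have hg_int : IntegrableOn (fun p : ℝ × ℝ => ‖fderiv ℝ φ p‖ ^ 2) T := by
    refine Integrable.mono' (integrable_const (c ^ 2)) hgmeas.aestronglyMeasurable ?_
    filter_upwards [ae_restrict_of_ae hae] with p hp
    rw [Real.norm_eq_abs, abs_of_nonneg (by positivity)]
    exact le_trans hp (hh_le p)
  have hh_int : IntegrableOn h T :=
    (integrable_const (c ^ 2)).indicator hSmeas
  -- φ is measurable and bounded on T
  have hφmeas : Measurable φ := by
    rw [hφ]
    refine Measurable.ite (measurableSet_le measurable_fst measurable_const)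
      (measurable_const.mul measurable_fst) ?_
    exact Measurable.ite (measurableSet_le measurable_fst measurable_const) measurable_const
      ((measurable_const.mul measurable_fst).add_const 3)
  have hφ_bdd : ∀ p ∈ T, 0 ≤ φ p ∧ φ p ≤ 3 := by
    intro p hp
    have hx : 0 < p.1 ∧ p.1 < 3 * r := by
      rw [hT] at hp
      rcases hp with hp | hp
      · exact ⟨hp.1.1, hp.1.2⟩
      · exact ⟨lt_trans hr0 hp.1.1, by nlinarith [hp.1.2]⟩
    rw [hφ]; simp only
    split_ifs with h1 h2
    · constructor
      · nlinarith [hx.1, hc0]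
      · nlinarith [hx.1]
    · exact ⟨by norm_num, by norm_num⟩
    · push_neg at h1 h2
      constructor
      · nlinarith [hx.2]
      · nlinarith [hx.1]
  have hφ2_int : IntegrableOn (fun p => (φ p) ^ 2) T := by
    refine Integrable.mono' (integrable_const (9:ℝ))
      ((hφmeas.pow_const 2).aestronglyMeasurable) ?_
    rw [ae_restrict_iff' hTmeas]
    filter_upwards with p hp
    obtain ⟨h0, h3⟩ := hφ_bdd p hp
    rw [Real.norm_eq_abs, abs_of_nonneg (by positivity)]
    nlinarith
  -- the room
  set Room : Set (ℝ × ℝ) := Ioo r (2 * r) ×ˢ Ioo 0 r with hRoom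
  have hRoomT : Room ⊆ T := by rw [hT]; exact subset_union_right
  have hRoommeas : MeasurableSet Room := measurableSet_Ioo.prod measurableSet_Ioo
  -- main chain
  calc ∫ p in T, ‖fderiv ℝ φ p‖ ^ 2
      ≤ ∫ p in T, h p := by
        refine integral_mono_ae hg_int hh_int ?_
        exact ae_restrict_of_ae hae
    _ = ∫ _ in T ∩ S, c ^ 2 := setIntegral_indicator hSmeas
    _ = (volume (T ∩ S)).toReal * c ^ 2 := by rw [setIntegral_const]; simp [smul_eq_mul]; exact Or.inl rfl
    _ ≤ (r ^ 4) * c ^ 2 := by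
        have hsub : T ∩ S ⊆ (Ioo 0 r ×ˢ Ioo 0 (r ^ 3 / 2)) ∪
            (Ioo (2 * r) (3 * r) ×ˢ Ioo 0 (r ^ 3 / 2)) := by
          rintro p ⟨hpT, hpS⟩
          rw [hT] at hpT
          rcases hpT with hp | hp
          · rcases hpS with hs | hs
            · exact Or.inl ⟨⟨hp.1.1, hs⟩, hp.2⟩
            · exact Or.inr ⟨⟨hs, hp.1.2⟩, hp.2⟩
          · exfalso
            rcases hpS with hs | hs
            · exact absurd hp.1.1 (not_lt.2 (le_of_lt hs))
            · exact absurd hp.1.2 (not_lt.2 (le_of_lt hs))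
        have hle : volume (T ∩ S) ≤ ENNReal.ofReal (r ^ 4) := by
          refine le_trans (measure_mono hsub) ?_
          refine le_trans (measure_union_le _ _) ?_
          rw [hvol, hvol]
          rw [← ENNReal.ofReal_mul (by linarith), ← ENNReal.ofReal_mul (by linarith),
            ← ENNReal.ofReal_add (by nlinarith [hr0, pow_pos hr0 3]) (by nlinarith [hr0, pow_pos hr0 3])]
          apply ENNReal.ofReal_le_ofReal
          ring_nf
          nlinarith [hr0]
        have := ENNReal.toReal_le_of_le_ofReal (by positivity) hle
        exact mul_le_mul_of_nonneg_right this (by positivity)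
    _ = r * r := by
        rw [hc, hr]
        field_simp
        ring
    _ = ∫ _ in Room, (1:ℝ) := by
        rw [setIntegral_const, smul_eq_mul, mul_one, hRoom, measureReal_def, hvol]
        rw [← ENNReal.ofReal_mul (by linarith)]
        rw [ENNReal.toReal_ofReal (by nlinarith [hr0])]
        ring
    _ = ∫ p in Room, (φ p) ^ 2 := by
        refine setIntegral_congr_fun hRoommeas ?_
        intro p hp
        rw [hφ]; simp only
        rw [if_neg (not_le.2 hp.1.1), if_pos (le_of_lt hp.1.2)]
        norm_num
    _ ≤ ∫ p in T, (φ p) ^ 2 := by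
        refine setIntegral_mono_set hφ2_int ?_ (HasSubset.Subset.eventuallyLE hRoomT)
        filter_upwards with p
        positivity
end

section
/- (Test function estimate on a polygon strip.) Let P ⊆ ℝ² be a bounded open set, let ℓ > 0, and let h : [0, ℓ] → [0, ∞) be measurable with b/2 ≤ h(x) ≤ b for all x ∈ [0,ℓ] and some b > 0, where for x ∈ (0,ℓ) the vertical slice {y : (x,y) ∈ P} has measure h(x) and is an interval starting at a fixed graph. Then for every N ≥ 1 and every nonzero u in the span of the functions u_j(x) = sin(jπx/ℓ)·𝟙_{[0,ℓ]}(x), 1 ≤ j ≤ N, viewed as a function of (x,y) ∈ P depending only on x, one has ∫_P |∇u|² / ∫_P |u|² ≤ 2·(Nπ/ℓ)². -/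
open Real Set MeasureTheory Bornology

lemma cosint (ℓ a : ℝ) : ∫ x in (0:ℝ)..ℓ, Real.cos (a * x) = if a = 0 then ℓ else Real.sin (a * ℓ) / a := by
  by_cases ha : a = 0
  · simp [ha]
  · rw [if_neg ha, intervalIntegral.integral_comp_mul_left _ ha]
    simp [integral_cos, div_eq_inv_mul]

lemma freq_sub_ne {ℓ : ℝ} (hℓ : 0 < ℓ) {j k : ℕ} (hjk : j ≠ k) :
    (j*π/ℓ) - (k*π/ℓ) ≠ 0 := by
  have hπ := Real.pi_pos
  have hne : (j:ℝ) ≠ k := by exact_mod_cast hjk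
  intro hc
  have h0 : ((j:ℝ) - k) * (π/ℓ) = 0 := by
    have h1 : (j:ℝ)*π/ℓ - (k:ℝ)*π/ℓ = 0 := hc
    field_simp at h1 ⊢
    nlinarith [h1]
  rcases mul_eq_zero.mp h0 with h1 | h2
  · exact hne (by linarith [sub_eq_zero.mp h1])
  · have : (0:ℝ) < π/ℓ := by positivity
    exact absurd h2 (ne_of_gt this)

lemma orth_aux {ℓ : ℝ} (hℓ : 0 < ℓ) (j k : ℕ) (hj : 1 ≤ j) (hk : 1 ≤ k) :
    (∫ x in (0:ℝ)..ℓ, Real.cos (((j*π/ℓ) - (k*π/ℓ))*x)) = (if j = k then ℓ else 0) ∧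
    (∫ x in (0:ℝ)..ℓ, Real.cos (((j*π/ℓ) + (k*π/ℓ))*x)) = 0 := by
  have hπ := Real.pi_pos
  constructor
  · rw [cosint]
    by_cases hjk : j = k
    · have : (j*π/ℓ) - (k*π/ℓ) = 0 := by rw [hjk]; ring
      rw [if_pos this, if_pos hjk]
    · have hd := freq_sub_ne hℓ hjk
      have hsin : Real.sin (((j*π/ℓ) - (k*π/ℓ))*ℓ) = 0 := by
        have : ((j*π/ℓ) - (k*π/ℓ))*ℓ = ((j:ℤ) - (k:ℤ) : ℤ) * π := by
          field_simp; push_cast; ring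
        rw [this, Real.sin_int_mul_pi]
      rw [if_neg hd, hsin, if_neg hjk, zero_div]
  · have hsum : (j*π/ℓ) + (k*π/ℓ) ≠ 0 := by positivity
    have hsin : Real.sin (((j*π/ℓ) + (k*π/ℓ))*ℓ) = 0 := by
      have : ((j*π/ℓ) + (k*π/ℓ))*ℓ = ((j+k : ℕ) : ℝ) * π := by
        field_simp; push_cast; ring
      rw [this, Real.sin_nat_mul_pi]
    rw [cosint, if_neg hsum, hsin, zero_div]

lemma orth_sin {ℓ : ℝ} (hℓ : 0 < ℓ) (j k : ℕ) (hj : 1 ≤ j) (hk : 1 ≤ k) :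
    ∫ x in (0:ℝ)..ℓ, Real.sin ((j*π/ℓ)*x) * Real.sin ((k*π/ℓ)*x)
      = if j = k then ℓ/2 else 0 := by
  have key : ∀ x : ℝ, Real.sin ((j*π/ℓ)*x) * Real.sin ((k*π/ℓ)*x)
      = (Real.cos (((j*π/ℓ) - (k*π/ℓ))*x) - Real.cos (((j*π/ℓ) + (k*π/ℓ))*x))/2 := by
    intro x
    rw [sub_mul, add_mul, Real.cos_sub, Real.cos_add]
    ring
  simp_rw [key]
  rw [intervalIntegral.integral_div, intervalIntegral.integral_sub
      (Continuous.intervalIntegrable (by fun_prop) _ _)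
      (Continuous.intervalIntegrable (by fun_prop) _ _),
      (orth_aux hℓ j k hj hk).1, (orth_aux hℓ j k hj hk).2]
  by_cases hjk : j = k <;> simp [hjk]

lemma orth_cos {ℓ : ℝ} (hℓ : 0 < ℓ) (j k : ℕ) (hj : 1 ≤ j) (hk : 1 ≤ k) :
    ∫ x in (0:ℝ)..ℓ, Real.cos ((j*π/ℓ)*x) * Real.cos ((k*π/ℓ)*x)
      = if j = k then ℓ/2 else 0 := by
  have key : ∀ x : ℝ, Real.cos ((j*π/ℓ)*x) * Real.cos ((k*π/ℓ)*x)
      = (Real.cos (((j*π/ℓ) - (k*π/ℓ))*x) + Real.cos (((j*π/ℓ) + (k*π/ℓ))*x))/2 := by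
    intro x
    rw [sub_mul, add_mul, Real.cos_sub, Real.cos_add]
    ring
  simp_rw [key]
  rw [intervalIntegral.integral_div, intervalIntegral.integral_add
      (Continuous.intervalIntegrable (by fun_prop) _ _)
      (Continuous.intervalIntegrable (by fun_prop) _ _),
      (orth_aux hℓ j k hj hk).1, (orth_aux hℓ j k hj hk).2]
  by_cases hjk : j = k <;> simp [hjk]

lemma sum_sq_integral {ℓ : ℝ} (N : ℕ) (d : ℕ → ℝ) (T : ℕ → ℝ → ℝ)
    (hT : ∀ j, Continuous (T j))
    (horth : ∀ j ∈ Finset.Icc 1 N, ∀ k ∈ Finset.Icc 1 N,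
      (∫ x in (0:ℝ)..ℓ, T j x * T k x) = if j = k then ℓ/2 else 0) :
    (∫ x in (0:ℝ)..ℓ, (∑ j ∈ Finset.Icc 1 N, d j * T j x)^2)
      = (ℓ/2) * ∑ j ∈ Finset.Icc 1 N, (d j)^2 := by
  set F : ℕ → ℝ → ℝ := fun j x => ∑ k ∈ Finset.Icc 1 N, (d j * d k) * (T j x * T k x) with hF
  have expand : ∀ x : ℝ, (∑ j ∈ Finset.Icc 1 N, d j * T j x)^2
      = ∑ j ∈ Finset.Icc 1 N, F j x := by
    intro x
    rw [sq, Finset.sum_mul_sum]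
    exact Finset.sum_congr rfl fun j _ => Finset.sum_congr rfl fun k _ => by ring
  have hFc : ∀ j k : ℕ, Continuous (fun x => (d j * d k) * (T j x * T k x)) :=
    fun j k => continuous_const.mul ((hT j).mul (hT k))
  have hFint : ∀ j ∈ Finset.Icc 1 N, IntervalIntegrable (F j) volume 0 ℓ := by
    intro j _
    exact (continuous_finset_sum _ (fun k _ => hFc j k)).intervalIntegrable _ _
  simp only [expand]
  rw [intervalIntegral.integral_finset_sum hFint]
  have step : ∀ j ∈ Finset.Icc 1 N, (∫ x in (0:ℝ)..ℓ, F j x) = (d j)^2 * (ℓ/2) := by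
    intro j hj
    have h1 : (∫ x in (0:ℝ)..ℓ, F j x)
        = ∑ k ∈ Finset.Icc 1 N, ∫ x in (0:ℝ)..ℓ, (d j * d k) * (T j x * T k x) :=
      intervalIntegral.integral_finset_sum (fun k _ => ((hFc j k).intervalIntegrable _ _))
    rw [h1]
    have h2 : ∀ k ∈ Finset.Icc 1 N,
        (∫ x in (0:ℝ)..ℓ, (d j * d k) * (T j x * T k x))
          = (d j * d k) * (if j = k then ℓ/2 else 0) := by
      intro k hk
      rw [intervalIntegral.integral_const_mul, horth j hj k hk]
    rw [Finset.sum_congr rfl h2, Finset.sum_eq_single_of_mem j hj]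
    · simp [sq]
    · intro k _ hkj
      rw [if_neg (Ne.symm hkj), mul_zero]
  rw [Finset.sum_congr rfl step, ← Finset.sum_mul, mul_comm]

lemma strip_int_bounds (P : Set (ℝ×ℝ)) (hPm : MeasurableSet P)
    (ℓ b : ℝ) (hℓ : 0 < ℓ) (hb : 0 < b) (h φ : ℝ → ℝ)
    (hh : ∀ x ∈ Icc 0 ℓ, b / 2 ≤ h x ∧ h x ≤ b)
    (hslice : ∀ x ∈ Ioo 0 ℓ, {y : ℝ | (x, y) ∈ P} = Ioo (φ x) (φ x + h x))
    (q : ℝ → ℝ) (hq : Continuous q) (hq0 : ∀ x, 0 ≤ q x) :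
    (b/2) * (∫ x in Ioo 0 ℓ, q x) ≤ (∫ p in P, (Ioo 0 ℓ).indicator q p.1)
    ∧ (∫ p in P, (Ioo 0 ℓ).indicator q p.1) ≤ b * (∫ x in Ioo 0 ℓ, q x) := by
  set f : ℝ → ℝ := (Ioo 0 ℓ).indicator q with hfdef
  have hfm : Measurable f := (hq.measurable).indicator measurableSet_Ioo
  have hf0 : ∀ x, 0 ≤ f x := fun x => indicator_nonneg (fun y _ => hq0 y) x
  -- Fubini
  have h1 : ∫ p in P, f p.1
      = (∫⁻ x, ENNReal.ofReal (f x) * volume {y | (x, y) ∈ P}).toReal := by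
    rw [integral_eq_lintegral_of_nonneg_ae (ae_of_all _ fun p : ℝ×ℝ => hf0 p.1)
        ((hfm.comp measurable_fst).aestronglyMeasurable)]
    congr 1
    have hm2 : Measurable fun p : ℝ×ℝ => ENNReal.ofReal (f p.1) :=
      (hfm.comp measurable_fst).ennreal_ofReal
    rw [← lintegral_indicator hPm, Measure.volume_eq_prod,
        lintegral_prod _ ((hm2.indicator hPm).aemeasurable)]
    congr 1
    funext x
    have hsm : MeasurableSet {y : ℝ | (x, y) ∈ P} := measurable_prodMk_left hPm
    have : ∀ y : ℝ, P.indicator (fun p : ℝ×ℝ => ENNReal.ofReal (f p.1)) (x, y)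
        = {y : ℝ | (x, y) ∈ P}.indicator (fun _ => ENNReal.ofReal (f x)) y := by
      intro y
      by_cases hy : (x, y) ∈ P
      · rw [indicator_of_mem hy, indicator_of_mem (show y ∈ {y : ℝ | (x, y) ∈ P} from hy)]
      · rw [indicator_of_notMem hy, indicator_of_notMem
            (show y ∉ {y : ℝ | (x, y) ∈ P} from hy)]
    simp_rw [this]
    rw [lintegral_indicator hsm, setLIntegral_const]
  -- restrict to the strip
  have h2 : (fun x => ENNReal.ofReal (f x) * volume {y | (x, y) ∈ P})
      = (Ioo 0 ℓ).indicator (fun x => ENNReal.ofReal (q x) * ENNReal.ofReal (h x)) := by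
    funext x
    by_cases hx : x ∈ Ioo 0 ℓ
    · rw [indicator_of_mem hx, hfdef, indicator_of_mem hx, hslice x hx, Real.volume_Ioo,
        add_sub_cancel_left]
    · rw [indicator_of_notMem hx, hfdef, indicator_of_notMem hx, ENNReal.ofReal_zero, zero_mul]
  rw [h1, h2, lintegral_indicator measurableSet_Ioo]
  set L := ∫⁻ x in Ioo 0 ℓ, ENNReal.ofReal (q x) * ENNReal.ofReal (h x) with hL
  have hqint : IntegrableOn q (Ioo 0 ℓ) volume :=
    (hq.integrableOn_Icc).mono_set Ioo_subset_Icc_self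
  have hofReal : ∫⁻ x in Ioo 0 ℓ, ENNReal.ofReal (q x) = ENNReal.ofReal (∫ x in Ioo 0 ℓ, q x) :=
    (ofReal_integral_eq_lintegral_ofReal hqint (ae_of_all _ hq0)).symm
  have hIq : 0 ≤ ∫ x in Ioo 0 ℓ, q x := integral_nonneg hq0
  have hup : L ≤ ENNReal.ofReal (b * ∫ x in Ioo 0 ℓ, q x) := by
    have step : L ≤ ∫⁻ x in Ioo 0 ℓ, ENNReal.ofReal (q x) * ENNReal.ofReal b := by
      refine lintegral_mono_ae ((ae_restrict_iff' measurableSet_Ioo).2 (ae_of_all _ ?_))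
      intro x hx
      exact mul_le_mul_right (ENNReal.ofReal_le_ofReal (hh x (Ioo_subset_Icc_self hx)).2) _
    calc L ≤ _ := step
      _ = (∫⁻ x in Ioo 0 ℓ, ENNReal.ofReal (q x)) * ENNReal.ofReal b :=
        lintegral_mul_const' _ _ ENNReal.ofReal_ne_top
      _ = ENNReal.ofReal (b * ∫ x in Ioo 0 ℓ, q x) := by
        rw [hofReal, ← ENNReal.ofReal_mul hIq, mul_comm]
  have hlo : ENNReal.ofReal ((b/2) * ∫ x in Ioo 0 ℓ, q x) ≤ L := by
    have step : (∫⁻ x in Ioo 0 ℓ, ENNReal.ofReal (q x) * ENNReal.ofReal (b/2)) ≤ L := by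
      refine lintegral_mono_ae ((ae_restrict_iff' measurableSet_Ioo).2 (ae_of_all _ ?_))
      intro x hx
      exact mul_le_mul_right (ENNReal.ofReal_le_ofReal (hh x (Ioo_subset_Icc_self hx)).1) _
    calc ENNReal.ofReal ((b/2) * ∫ x in Ioo 0 ℓ, q x)
        = (∫⁻ x in Ioo 0 ℓ, ENNReal.ofReal (q x)) * ENNReal.ofReal (b/2) := by
          rw [hofReal, ← ENNReal.ofReal_mul hIq, mul_comm]
      _ = ∫⁻ x in Ioo 0 ℓ, ENNReal.ofReal (q x) * ENNReal.ofReal (b/2) :=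
        (lintegral_mul_const' _ _ ENNReal.ofReal_ne_top).symm
      _ ≤ L := step
  have hLtop : L ≠ ⊤ := ne_top_of_le_ne_top ENNReal.ofReal_ne_top hup
  constructor
  · calc (b/2) * ∫ x in Ioo 0 ℓ, q x
        = (ENNReal.ofReal ((b/2) * ∫ x in Ioo 0 ℓ, q x)).toReal := by
          rw [ENNReal.toReal_ofReal (by positivity)]
      _ ≤ L.toReal := ENNReal.toReal_mono hLtop hlo
  · exact ENNReal.toReal_le_of_le_ofReal (by positivity) hup

/-- Test-function estimate on a strip of a polygon: if the vertical slices
of the bounded open set `P ⊆ ℝ²` over `x ∈ (0,ℓ)` are intervals of length `h(x)` with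
`b/2 ≤ h ≤ b`, then every nonzero function `u` in the span of
`sin(jπx/ℓ)·𝟙_{[0,ℓ]}`, `1 ≤ j ≤ N` (viewed as a function on `ℝ²` depending only on `x`)
has Rayleigh quotient over `P` at most `2(Nπ/ℓ)²`. -/
theorem stmt12 (P : Set (ℝ × ℝ)) (hPo : IsOpen P) (hPb : IsBounded P)
    (ℓ b : ℝ) (hℓ : 0 < ℓ) (hb : 0 < b) (h φ : ℝ → ℝ)
    (hh : ∀ x ∈ Icc 0 ℓ, b / 2 ≤ h x ∧ h x ≤ b)
    (hslice : ∀ x ∈ Ioo 0 ℓ, {y : ℝ | (x, y) ∈ P} = Ioo (φ x) (φ x + h x))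
    (N : ℕ) (hN : 1 ≤ N) (c : ℕ → ℝ) (hc : ∃ j ∈ Finset.Icc 1 N, c j ≠ 0)
    (u : ℝ × ℝ → ℝ)
    (hu : u = fun p => if p.1 ∈ Icc 0 ℓ
      then ∑ j ∈ Finset.Icc 1 N, c j * Real.sin (j * π * p.1 / ℓ) else 0) :
    (∫ p in P, ‖fderiv ℝ u p‖ ^ 2) / (∫ p in P, (u p) ^ 2) ≤ 2 * (N * π / ℓ) ^ 2 := by
  have hπ := Real.pi_pos
  set g : ℝ → ℝ := fun x => ∑ j ∈ Finset.Icc 1 N, c j * Real.sin ((j:ℝ) * π * x / ℓ) with hgdef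
  set G : ℝ → ℝ :=
    fun x => ∑ j ∈ Finset.Icc 1 N, (c j * ((j:ℝ)*π/ℓ)) * Real.cos ((j:ℝ) * π * x / ℓ) with hGdef
  have hgu : u = fun p : ℝ×ℝ => if p.1 ∈ Icc 0 ℓ then g p.1 else 0 := hu
  have harg : ∀ (j : ℕ) (x : ℝ), (j:ℝ) * π * x / ℓ = ((j:ℝ)*π/ℓ) * x := fun j x => by ring
  have hgc : Continuous g := by
    apply continuous_finset_sum; intro j _; fun_prop
  have hGc : Continuous G := by
    apply continuous_finset_sum; intro j _; fun_prop
  have hderiv : ∀ x : ℝ, HasDerivAt g (G x) x := by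
    intro x
    have hterm : ∀ j ∈ Finset.Icc 1 N,
        HasDerivAt (fun x : ℝ => c j * Real.sin ((j:ℝ)*π*x/ℓ))
          ((c j * ((j:ℝ)*π/ℓ)) * Real.cos ((j:ℝ)*π*x/ℓ)) x := by
      intro j _
      have h1 : HasDerivAt (fun x : ℝ => (j:ℝ)*π*x/ℓ) ((j:ℝ)*π/ℓ) x := by
        simpa using ((hasDerivAt_id x).const_mul ((j:ℝ)*π)).div_const ℓ
      have h2 := (h1.sin).const_mul (c j)
      rw [show c j * ((j:ℝ)*π/ℓ) * Real.cos ((j:ℝ)*π*x/ℓ)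
          = c j * (Real.cos ((j:ℝ)*π*x/ℓ) * ((j:ℝ)*π/ℓ)) by ring]
      exact h2
    exact HasDerivAt.fun_sum hterm
  -- boundary values
  have hg0 : g 0 = 0 := by simp [hgdef]
  have hgl : g ℓ = 0 := by
    have harg2 : ∀ j : ℕ, (j:ℝ) * π * ℓ / ℓ = (j:ℝ) * π := fun j => by field_simp
    simp [hgdef, harg2, Real.sin_nat_mul_pi]
  -- pointwise identification of u^2
  have hu2 : ∀ p : ℝ×ℝ, (u p)^2 = (Ioo 0 ℓ).indicator (fun x => g x^2) p.1 := by
    intro p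
    simp only [hgu]
    by_cases h1 : p.1 ∈ Ioo 0 ℓ
    · rw [indicator_of_mem h1, if_pos (Ioo_subset_Icc_self h1)]
    · rw [indicator_of_notMem h1]
      by_cases h2 : p.1 ∈ Icc 0 ℓ
      · rw [if_pos h2]
        rcases eq_or_lt_of_le h2.1 with he | hlt
        · rw [← he, hg0]; norm_num
        · have hpl : p.1 = ℓ := by
            by_contra hne
            exact h1 ⟨hlt, lt_of_le_of_ne h2.2 hne⟩
          rw [hpl, hgl]; norm_num
      · rw [if_neg h2]; norm_num
  -- null set of bad vertical lines
  have hnull : (volume : Measure (ℝ×ℝ)) {p : ℝ×ℝ | p.1 = 0 ∨ p.1 = ℓ} = 0 := by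
    have hset : {p : ℝ×ℝ | p.1 = 0 ∨ p.1 = ℓ} = ({0, ℓ} : Set ℝ) ×ˢ (univ : Set ℝ) := by
      ext p; simp [Set.mem_prod]
    rw [hset, Measure.volume_eq_prod, Measure.prod_prod,
      show (volume ({0, ℓ} : Set ℝ)) = 0 from (Set.toFinite _).measure_zero _, zero_mul]
  -- pointwise identification of the gradient away from the bad lines
  have hfd : ∀ p : ℝ×ℝ, p.1 ≠ 0 → p.1 ≠ ℓ →
      ‖fderiv ℝ u p‖^2 = (Ioo 0 ℓ).indicator (fun x => G x^2) p.1 := by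
    intro p h0 hL
    by_cases hmem : p.1 ∈ Ioo 0 ℓ
    · have hopen : IsOpen {q : ℝ×ℝ | q.1 ∈ Ioo 0 ℓ} := isOpen_Ioo.preimage continuous_fst
      have hev : u =ᶠ[nhds p] fun q : ℝ×ℝ => g q.1 := by
        filter_upwards [hopen.mem_nhds hmem] with q hq
        simp only [hgu]
        rw [if_pos (Ioo_subset_Icc_self hq)]
      have hF : HasFDerivAt (fun q : ℝ×ℝ => g q.1)
          ((G p.1) • ContinuousLinearMap.fst ℝ ℝ ℝ) p :=
        (hderiv p.1).comp_hasFDerivAt p hasFDerivAt_fst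
      rw [hev.fderiv_eq, hF.fderiv, indicator_of_mem hmem, norm_smul]
      simp [Real.norm_eq_abs, sq_abs]
    · have hout : p.1 ∉ Icc 0 ℓ :=
        fun hin => hmem ⟨lt_of_le_of_ne hin.1 (Ne.symm h0), lt_of_le_of_ne hin.2 hL⟩
      have hopen : IsOpen ((Prod.fst ⁻¹' (Icc 0 ℓ : Set ℝ))ᶜ : Set (ℝ×ℝ)) :=
        (isClosed_Icc.preimage continuous_fst).isOpen_compl
      have hev : u =ᶠ[nhds p] fun _ : ℝ×ℝ => (0:ℝ) := by
        filter_upwards [hopen.mem_nhds hout] with q hq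
        simp only [hgu]
        exact if_neg hq
      rw [hev.fderiv_eq, fderiv_fun_const, indicator_of_notMem hmem]
      simp
  -- integral identifications
  have hden_eq : (∫ p in P, (u p)^2)
      = ∫ p in P, (Ioo 0 ℓ).indicator (fun x => g x^2) p.1 :=
    integral_congr_ae (ae_of_all _ hu2)
  have hnum_eq : (∫ p in P, ‖fderiv ℝ u p‖^2)
      = ∫ p in P, (Ioo 0 ℓ).indicator (fun x => G x^2) p.1 := by
    apply integral_congr_ae
    apply ae_restrict_of_ae
    have h1 : ∀ᵐ p : ℝ×ℝ, ¬(p.1 = 0 ∨ p.1 = ℓ) := by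
      rw [ae_iff]
      exact measure_mono_null (fun p hp => not_not.mp hp) hnull
    exact h1.mono fun p hp => by push_neg at hp; exact hfd p hp.1 hp.2
  -- one-dimensional integrals
  have hSg : (∫ x in Ioo (0:ℝ) ℓ, g x ^ 2) = (ℓ/2) * ∑ j ∈ Finset.Icc 1 N, (c j)^2 := by
    rw [← MeasureTheory.integral_Ioc_eq_integral_Ioo, ← intervalIntegral.integral_of_le hℓ.le]
    have hfun : g = fun x => ∑ j ∈ Finset.Icc 1 N, c j * Real.sin (((j:ℝ)*π/ℓ)*x) := by
      funext x; exact Finset.sum_congr rfl fun j _ => by rw [harg]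
    rw [hfun]
    exact sum_sq_integral N c _ (fun j => by fun_prop)
      (fun j hj k hk => orth_sin hℓ j k (Finset.mem_Icc.mp hj).1 (Finset.mem_Icc.mp hk).1)
  have hSG : (∫ x in Ioo (0:ℝ) ℓ, G x ^ 2)
      = (ℓ/2) * ∑ j ∈ Finset.Icc 1 N, (c j * ((j:ℝ)*π/ℓ))^2 := by
    rw [← MeasureTheory.integral_Ioc_eq_integral_Ioo, ← intervalIntegral.integral_of_le hℓ.le]
    have hfun : G = fun x => ∑ j ∈ Finset.Icc 1 N,
        (c j * ((j:ℝ)*π/ℓ)) * Real.cos (((j:ℝ)*π/ℓ)*x) := by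
      funext x; exact Finset.sum_congr rfl fun j _ => by rw [harg]
    rw [hfun]
    exact sum_sq_integral N _ _ (fun j => by fun_prop)
      (fun j hj k hk => orth_cos hℓ j k (Finset.mem_Icc.mp hj).1 (Finset.mem_Icc.mp hk).1)
  -- strip bounds
  obtain ⟨hBlo, hBhi⟩ := strip_int_bounds P hPo.measurableSet ℓ b hℓ hb h φ hh hslice
    (fun x => g x ^ 2) (by fun_prop) (fun x => sq_nonneg _)
  obtain ⟨hAlo, hAhi⟩ := strip_int_bounds P hPo.measurableSet ℓ b hℓ hb h φ hh hslice
    (fun x => G x ^ 2) (by fun_prop) (fun x => sq_nonneg _)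
  rw [hSg] at hBlo
  rw [hSG] at hAhi
  -- numerics
  set S := ∑ j ∈ Finset.Icc 1 N, (c j)^2 with hSdef
  have hS0 : 0 < S := by
    obtain ⟨j0, hj0mem, hj0⟩ := hc
    have h1 : (c j0)^2 ≤ S :=
      Finset.single_le_sum (f := fun j => (c j)^2) (fun i _ => sq_nonneg _) hj0mem
    have h2 : 0 < (c j0)^2 := lt_of_le_of_ne (sq_nonneg _) (Ne.symm (pow_ne_zero 2 hj0))
    linarith
  set K := ((N:ℝ) * π / ℓ)^2 with hKdef
  have hK0 : 0 ≤ K := sq_nonneg _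
  have hsum_le : ∑ j ∈ Finset.Icc 1 N, (c j * ((j:ℝ)*π/ℓ))^2 ≤ K * S := by
    rw [hSdef, Finset.mul_sum]
    apply Finset.sum_le_sum
    intro j hj
    have hjN : (j:ℝ) ≤ N := Nat.cast_le.mpr (Finset.mem_Icc.mp hj).2
    have hle : ((j:ℝ)*π/ℓ)^2 ≤ K := by
      have h0 : 0 ≤ (j:ℝ)*π/ℓ := by positivity
      have h1 : (j:ℝ)*π/ℓ ≤ (N:ℝ)*π/ℓ := by gcongr
      exact pow_le_pow_left₀ h0 h1 2
    calc (c j * ((j:ℝ)*π/ℓ))^2 = ((j:ℝ)*π/ℓ)^2 * (c j)^2 := by ring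
      _ ≤ K * (c j)^2 := mul_le_mul_of_nonneg_right hle (sq_nonneg _)
  -- conclusion
  rw [hnum_eq, hden_eq]
  have hBpos : 0 < ∫ p in P, (Ioo 0 ℓ).indicator (fun x => g x^2) p.1 := by
    have : 0 < (b/2) * ((ℓ/2) * S) := by positivity
    linarith
  rw [div_le_iff₀ hBpos]
  calc (∫ p in P, (Ioo 0 ℓ).indicator (fun x => G x^2) p.1)
      ≤ b * ((ℓ/2) * ∑ j ∈ Finset.Icc 1 N, (c j * ((j:ℝ)*π/ℓ))^2) := hAhi
    _ ≤ b * ((ℓ/2) * (K * S)) := by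
        apply mul_le_mul_of_nonneg_left _ hb.le
        exact mul_le_mul_of_nonneg_left hsum_le (by positivity)
    _ = 2 * K * ((b/2) * ((ℓ/2) * S)) := by ring
    _ ≤ 2 * K * ∫ p in P, (Ioo 0 ℓ).indicator (fun x => g x^2) p.1 :=
        mul_le_mul_of_nonneg_left hBlo (by positivity)
end
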